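/- arXiv:1302.4660 — 8 statements merged into one kernel-verified Lean document; each statement's English description precedes it below -/
import Mathlib

section
/- (Theorem 1, error-floor case.) Assume μ1 = μ2 = 0. If (r1 + r2)/2 = r12, then the Bhattacharyya upper bound P̄_err(σ²) converges, as σ² → 0 from the right, to the finite positive limit sqrt(P1·P2)·( 2^{−M}·v12 / sqrt(v1·v2) )^{−1/2}; in particular P̄_err(σ²) = O(1) and does not tend to 0 as σ² → 0. -/
open Matrix MeasureTheory Filter Real Topology

/-- Pseudo-determinant of a real square matrix: the product of the nonzero
eigenvalues when the matrix is Hermitian (symmetric), with the empty product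
equal to 1; junk value 0 otherwise. -/
noncomputable def pdet {n : ℕ} (A : Matrix (Fin n) (Fin n) ℝ) : ℝ :=
  if h : A.IsHermitian then
    ∏ i ∈ Finset.univ.filter (fun i => h.eigenvalues i ≠ 0), h.eigenvalues i
  else 0

/-- Bhattacharyya exponent `K(σ²)` for the two-class compressive
classification problem, as a function of the noise level `s = σ²`. -/
noncomputable def Kb {M N : ℕ} (Φ : Matrix (Fin M) (Fin N) ℝ)
    (S1 S2 : Matrix (Fin N) (Fin N) ℝ) (μ1 μ2 : Fin N → ℝ) (s : ℝ) : ℝ :=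
  1/8 * ((Φ *ᵥ (μ1 - μ2)) ⬝ᵥ
      (((1/2 : ℝ) • (Φ * (S1 + S2) * Φᵀ + s • (1 : Matrix (Fin M) (Fin M) ℝ)))⁻¹
        *ᵥ (Φ *ᵥ (μ1 - μ2))))
  + 1/2 * Real.log
      (((1/2 : ℝ) • (Φ * (S1 + S2) * Φᵀ + s • (1 : Matrix (Fin M) (Fin M) ℝ))).det /
        Real.sqrt ((Φ * S1 * Φᵀ + s • (1 : Matrix (Fin M) (Fin M) ℝ)).det *
          (Φ * S2 * Φᵀ + s • (1 : Matrix (Fin M) (Fin M) ℝ)).det))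

/-- Bhattacharyya upper bound `P̄_err(σ²)` to the misclassification probability. -/
noncomputable def Perr {M N : ℕ} (Φ : Matrix (Fin M) (Fin N) ℝ)
    (S1 S2 : Matrix (Fin N) (Fin N) ℝ) (μ1 μ2 : Fin N → ℝ) (P1 P2 : ℝ) (s : ℝ) : ℝ :=
  Real.sqrt (P1 * P2) * Real.exp (-(Kb Φ S1 S2 μ1 μ2 s))

/-- det of `A + s•1` for Hermitian `A` is the product of `eig i + s`. -/
lemma det_add_smul_one {m : ℕ} {A : Matrix (Fin m) (Fin m) ℝ} (hA : A.IsHermitian) (s : ℝ) :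
    (A + s • (1 : Matrix (Fin m) (Fin m) ℝ)).det = ∏ i, (hA.eigenvalues i + s) := by
  have hU : (hA.eigenvectorUnitary : Matrix (Fin m) (Fin m) ℝ) *
      star (hA.eigenvectorUnitary : Matrix (Fin m) (Fin m) ℝ) = 1 :=
    (Matrix.mem_unitaryGroup_iff).mp (hA.eigenvectorUnitary).2
  have h1 : A + s • (1 : Matrix (Fin m) (Fin m) ℝ) =
      (hA.eigenvectorUnitary : Matrix (Fin m) (Fin m) ℝ) *
        (diagonal (RCLike.ofReal ∘ hA.eigenvalues) + s • 1) *
        star (hA.eigenvectorUnitary : Matrix (Fin m) (Fin m) ℝ) := by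
    rw [Matrix.mul_add, Matrix.add_mul, ← Unitary.conjStarAlgAut_apply (S := ℝ), ← hA.spectral_theorem]
    congr 1
    rw [Matrix.mul_smul, Matrix.smul_mul, Matrix.mul_one, hU]
  rw [h1, Matrix.det_mul, Matrix.det_mul, mul_right_comm, ← Matrix.det_mul, hU]
  simp [Matrix.smul_one_eq_diagonal, diagonal_add, det_diagonal]

/-- The finite "regular part": product of `eig i + s` over the nonzero eigenvalues. -/
noncomputable def Fe {m : ℕ} {A : Matrix (Fin m) (Fin m) ℝ} (hA : A.IsHermitian) (s : ℝ) : ℝ :=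
  ∏ i ∈ Finset.univ.filter (fun i => hA.eigenvalues i ≠ 0), (hA.eigenvalues i + s)

lemma Fe_continuous {m : ℕ} {A : Matrix (Fin m) (Fin m) ℝ} (hA : A.IsHermitian) :
    Continuous (Fe hA) := by
  apply continuous_finset_prod
  exact fun i _ => continuous_const.add continuous_id

lemma Fe_pos {m : ℕ} {A : Matrix (Fin m) (Fin m) ℝ} (hA : A.PosSemidef) {s : ℝ}
    (hs : 0 ≤ s) : 0 < Fe hA.1 s := by
  apply Finset.prod_pos
  intro i hi
  simp only [Finset.mem_filter] at hi
  have h0 := hA.eigenvalues_nonneg i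
  have : 0 < hA.1.eigenvalues i := lt_of_le_of_ne h0 (Ne.symm hi.2)
  linarith

lemma pdet_eq_Fe_zero {m : ℕ} {A : Matrix (Fin m) (Fin m) ℝ} (hA : A.IsHermitian) :
    pdet A = Fe hA 0 := by
  rw [pdet, dif_pos hA, Fe]
  exact Finset.prod_congr rfl (fun i _ => by rw [add_zero])

lemma det_split {m : ℕ} {A : Matrix (Fin m) (Fin m) ℝ} (hA : A.IsHermitian) (s : ℝ) :
    (A + s • (1 : Matrix (Fin m) (Fin m) ℝ)).det =
      s ^ (Finset.univ.filter (fun i => ¬ hA.eigenvalues i ≠ 0)).card * Fe hA s := by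
  rw [det_add_smul_one hA s,
    ← Finset.prod_filter_mul_prod_filter_not Finset.univ (fun i => hA.eigenvalues i ≠ 0), mul_comm]
  congr 1
  calc (∏ i ∈ Finset.univ.filter (fun i => ¬ hA.eigenvalues i ≠ 0), (hA.eigenvalues i + s))
      = ∏ _i ∈ Finset.univ.filter (fun i => ¬ hA.eigenvalues i ≠ 0), s := by
        refine Finset.prod_congr rfl (fun i hi => ?_)
        simp only [Finset.mem_filter, not_not] at hi
        rw [hi.2, zero_add]
    _ = _ := Finset.prod_const s

/-- Theorem 1, error-floor case: with zero-mean classes, if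
`(r1 + r2)/2 = r12`, the Bhattacharyya upper bound converges as `σ² → 0⁺` to
the finite positive limit `sqrt(P1 P2) (2^{-M} v12 / sqrt(v1 v2))^{-1/2}`;
in particular it is `O(1)` and does not tend to `0`. -/
theorem theorem1_error_floor (M N : ℕ) (hM : 0 < M) (hN : 0 < N)
    (Φ : Matrix (Fin M) (Fin N) ℝ) (S1 S2 : Matrix (Fin N) (Fin N) ℝ)
    (hS1 : S1.PosSemidef) (hS2 : S2.PosSemidef) (μ1 μ2 : Fin N → ℝ)
    (hμ1 : μ1 = 0) (hμ2 : μ2 = 0)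
    (P1 P2 : ℝ) (hP1 : 0 < P1) (hP2 : 0 < P2) (hP : P1 + P2 = 1)
    (hrank : (Φ * S1 * Φᵀ).rank + (Φ * S2 * Φᵀ).rank = 2 * (Φ * (S1 + S2) * Φᵀ).rank) :
    0 < Real.sqrt (P1 * P2) *
        ((2:ℝ) ^ (-(M:ℝ)) * pdet (Φ * (S1 + S2) * Φᵀ) /
          Real.sqrt (pdet (Φ * S1 * Φᵀ) * pdet (Φ * S2 * Φᵀ))) ^ (-(1:ℝ)/2) ∧
    Filter.Tendsto (fun s : ℝ => Perr Φ S1 S2 μ1 μ2 P1 P2 s) (𝓝[>] 0)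
      (𝓝 (Real.sqrt (P1 * P2) *
        ((2:ℝ) ^ (-(M:ℝ)) * pdet (Φ * (S1 + S2) * Φᵀ) /
          Real.sqrt (pdet (Φ * S1 * Φᵀ) * pdet (Φ * S2 * Φᵀ))) ^ (-(1:ℝ)/2))) := by
  subst hμ1 hμ2
  -- positive semidefiniteness of the compressed covariances
  have hT : Φᵀ = Φᴴ := (Matrix.conjTranspose_eq_transpose_of_trivial Φ).symm
  have pA1 : (Φ * S1 * Φᵀ).PosSemidef := by
    rw [hT]; exact hS1.mul_mul_conjTranspose_same Φ
  have pA2 : (Φ * S2 * Φᵀ).PosSemidef := by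
    rw [hT]; exact hS2.mul_mul_conjTranspose_same Φ
  have pA12 : (Φ * (S1 + S2) * Φᵀ).PosSemidef := by
    rw [hT]; exact (hS1.add hS2).mul_mul_conjTranspose_same Φ
  set h1 := pA1.1 with hh1
  set h2 := pA2.1 with hh2
  set h12 := pA12.1 with hh12
  -- cardinalities of zero / nonzero eigenvalue index sets
  set c1 := (Finset.univ.filter (fun i => ¬ h1.eigenvalues i ≠ 0)).card with hc1
  set c2 := (Finset.univ.filter (fun i => ¬ h2.eigenvalues i ≠ 0)).card with hc2
  set k := (Finset.univ.filter (fun i => ¬ h12.eigenvalues i ≠ 0)).card with hk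
  have hr1 : (Φ * S1 * Φᵀ).rank = (Finset.univ.filter (fun i => h1.eigenvalues i ≠ 0)).card := by
    rw [h1.rank_eq_card_non_zero_eigs, Fintype.card_subtype]
  have hr2 : (Φ * S2 * Φᵀ).rank = (Finset.univ.filter (fun i => h2.eigenvalues i ≠ 0)).card := by
    rw [h2.rank_eq_card_non_zero_eigs, Fintype.card_subtype]
  have hr12 : (Φ * (S1 + S2) * Φᵀ).rank
      = (Finset.univ.filter (fun i => h12.eigenvalues i ≠ 0)).card := by
    rw [h12.rank_eq_card_non_zero_eigs, Fintype.card_subtype]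
  have hsum1 : (Finset.univ.filter (fun i => h1.eigenvalues i ≠ 0)).card + c1 = M := by
    rw [hc1, Finset.card_filter_add_card_filter_not]; simp
  have hsum2 : (Finset.univ.filter (fun i => h2.eigenvalues i ≠ 0)).card + c2 = M := by
    rw [hc2, Finset.card_filter_add_card_filter_not]; simp
  have hsum12 : (Finset.univ.filter (fun i => h12.eigenvalues i ≠ 0)).card + k = M := by
    rw [hk, Finset.card_filter_add_card_filter_not]; simp
  have hck : c1 + c2 = 2 * k := by
    rw [hr1, hr2, hr12] at hrank; omega
  -- the regularized bound as a continuous function of s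
  set φ : ℝ → ℝ := fun s => (2:ℝ) ^ (-(M:ℝ)) * Fe h12 s / Real.sqrt (Fe h1 s * Fe h2 s)
    with hφ
  have hhalf : ((1:ℝ)/2) ^ M = (2:ℝ) ^ (-(M:ℝ)) := by
    rw [Real.rpow_neg (by norm_num : (0:ℝ) ≤ 2), Real.rpow_natCast]
    simp [one_div, inv_pow]
  have hφpos : ∀ s : ℝ, 0 ≤ s → 0 < φ s := by
    intro s hs
    apply div_pos
    · exact mul_pos (Real.rpow_pos_of_pos (by norm_num) _) (Fe_pos pA12 hs)
    · exact Real.sqrt_pos.mpr (mul_pos (Fe_pos pA1 hs) (Fe_pos pA2 hs))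
  -- identification of the limit constant
  have hconst : (2:ℝ) ^ (-(M:ℝ)) * pdet (Φ * (S1 + S2) * Φᵀ) /
      Real.sqrt (pdet (Φ * S1 * Φᵀ) * pdet (Φ * S2 * Φᵀ)) = φ 0 := by
    rw [pdet_eq_Fe_zero h12, pdet_eq_Fe_zero h1, pdet_eq_Fe_zero h2]
  -- pointwise identification of Perr with sqrt(P1 P2) * φ(s)^(-1/2) for s > 0
  have key : ∀ s : ℝ, 0 < s →
      Perr Φ S1 S2 0 0 P1 P2 s = Real.sqrt (P1 * P2) * (φ s) ^ (-(1:ℝ)/2) := by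
    intro s hs
    have hdet12 : ((1/2 : ℝ) • (Φ * (S1 + S2) * Φᵀ + s • (1 : Matrix (Fin M) (Fin M) ℝ))).det
        = (1/2 : ℝ) ^ M * (s ^ k * Fe h12 s) := by
      rw [Matrix.det_smul, det_split h12 s, Fintype.card_fin, ← hk]
    have hdet1 : (Φ * S1 * Φᵀ + s • (1 : Matrix (Fin M) (Fin M) ℝ)).det
        = s ^ c1 * Fe h1 s := det_split h1 s
    have hdet2 : (Φ * S2 * Φᵀ + s • (1 : Matrix (Fin M) (Fin M) ℝ)).det
        = s ^ c2 * Fe h2 s := det_split h2 s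
    have hK : Kb Φ S1 S2 0 0 s = 1/2 * Real.log (φ s) := by
      rw [Kb]
      simp only [sub_zero, sub_self, Matrix.mulVec_zero, zero_dotProduct,
        dotProduct_zero, mul_zero, zero_add]
      congr 2
      rw [hdet12, hdet1, hdet2]
      have hG : s ^ c1 * Fe h1 s * (s ^ c2 * Fe h2 s)
          = (s ^ k) ^ 2 * (Fe h1 s * Fe h2 s) := by
        rw [mul_mul_mul_comm, ← pow_add, hck, mul_comm 2 k, pow_mul]
      rw [hG, Real.sqrt_mul (sq_nonneg _), Real.sqrt_sq (pow_nonneg hs.le k)]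
      have hnum : (1/2 : ℝ) ^ M * (s ^ k * Fe h12 s)
          = s ^ k * ((1/2 : ℝ) ^ M * Fe h12 s) := by ring
      rw [hnum, mul_div_mul_left _ _ (pow_ne_zero k hs.ne'), hhalf]
    rw [Perr, hK, Real.rpow_def_of_pos (hφpos s hs.le)]
    congr 2
    ring
  have hsqrtpos : 0 < Real.sqrt (P1 * P2) := Real.sqrt_pos.mpr (mul_pos hP1 hP2)
  have hφ0 : 0 < φ 0 := hφpos 0 le_rfl
  constructor
  · rw [hconst]
    exact mul_pos hsqrtpos (Real.rpow_pos_of_pos hφ0 _)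
  · rw [hconst]
    -- continuity of φ at 0 (within (0,∞))
    have hcontφ : ContinuousAt φ 0 := by
      apply ContinuousAt.div
      · exact (continuous_const.mul (Fe_continuous h12)).continuousAt
      · exact (Real.continuous_sqrt.comp
          ((Fe_continuous h1).mul (Fe_continuous h2))).continuousAt
      · exact (Real.sqrt_pos.mpr (mul_pos (Fe_pos pA1 le_rfl) (Fe_pos pA2 le_rfl))).ne'
    have htends : Filter.Tendsto φ (𝓝[>] (0:ℝ)) (𝓝 (φ 0)) :=
      (hcontφ.continuousWithinAt).tendsto
    have h2' : Filter.Tendsto (fun s => Real.sqrt (P1 * P2) * (φ s) ^ (-(1:ℝ)/2))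
        (𝓝[>] (0:ℝ)) (𝓝 (Real.sqrt (P1 * P2) * (φ 0) ^ (-(1:ℝ)/2))) :=
      (htends.rpow_const (Or.inl hφ0.ne')).const_mul _
    refine h2'.congr' ?_
    filter_upwards [self_mem_nhdsWithin] with s hs
    exact (key s hs).symm
end

section
/- (Theorem 1, diversity order.) Assume μ1 = μ2 = 0. If (r1 + r2)/2 < r12, then the diversity order of the Bhattacharyya upper bound equals d = (2·r12 − r1 − r2)/4; that is, lim_{σ² → 0+} log P̄_err(σ²) / log σ² = (2·r12 − r1 − r2)/4. -/
open Matrix MeasureTheory Filter Real Topology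

lemma det_add_smul_one_s3 {M : ℕ} {B : Matrix (Fin M) (Fin M) ℝ} (hB : B.IsHermitian) (s : ℝ) :
    (B + s • (1 : Matrix (Fin M) (Fin M) ℝ)).det = ∏ i, (hB.eigenvalues i + s) := by
  have hU := (Matrix.mem_unitaryGroup_iff).mp (hB.eigenvectorUnitary).2
  have key : B + s • (1 : Matrix (Fin M) (Fin M) ℝ)
      = (hB.eigenvectorUnitary : Matrix (Fin M) (Fin M) ℝ)
        * diagonal (fun i => hB.eigenvalues i + s)
        * (star (hB.eigenvectorUnitary : Matrix (Fin M) (Fin M) ℝ)) := by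
    have h2 : s • ((hB.eigenvectorUnitary : Matrix (Fin M) (Fin M) ℝ)
        * star (hB.eigenvectorUnitary : Matrix (Fin M) (Fin M) ℝ))
        = (hB.eigenvectorUnitary : Matrix (Fin M) (Fin M) ℝ)
          * diagonal (fun _ : Fin M => s)
          * star (hB.eigenvectorUnitary : Matrix (Fin M) (Fin M) ℝ) := by
      rw [← Matrix.smul_one_eq_diagonal]
      simp [Matrix.mul_smul, Matrix.smul_mul]
    conv_lhs => rw [hB.spectral_theorem, Unitary.conjStarAlgAut_apply, ← hU]
    rw [h2, ← Matrix.add_mul, ← Matrix.mul_add, ← Matrix.diagonal_add]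
    simp [Function.comp]
  rw [key, Matrix.det_mul_right_comm]
  simp [hU]

lemma tendsto_logdet {M : ℕ} {B : Matrix (Fin M) (Fin M) ℝ} (hB : B.PosSemidef) :
    Tendsto (fun s : ℝ => Real.log (B + s • (1 : Matrix (Fin M) (Fin M) ℝ)).det / Real.log s)
      (𝓝[>] 0) (𝓝 ((M : ℝ) - B.rank)) := by
  have hlnn := hB.eigenvalues_nonneg
  set lam := hB.1.eigenvalues with hlam
  have heq : (fun s : ℝ => Real.log (B + s • (1 : Matrix (Fin M) (Fin M) ℝ)).det / Real.log s)
      =ᶠ[𝓝[>] 0] fun s => ∑ i, Real.log (lam i + s) / Real.log s := by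
    filter_upwards [self_mem_nhdsWithin] with s hs
    have hs' : (0:ℝ) < s := hs
    rw [det_add_smul_one_s3 hB.1 s, Real.log_prod, Finset.sum_div]
    intro i _
    exact ne_of_gt (by linarith [hlnn i])
  rw [tendsto_congr' heq]
  have hsum : Tendsto (fun s : ℝ => ∑ i, Real.log (lam i + s) / Real.log s) (𝓝[>] 0)
      (𝓝 (∑ i, if lam i = 0 then (1:ℝ) else 0)) := by
    apply tendsto_finset_sum
    intro i _
    by_cases h0 : lam i = 0
    · simp only [h0, if_true, zero_add]
      apply Tendsto.congr' (f₁ := fun _ => (1:ℝ))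
      · filter_upwards [Ioo_mem_nhdsGT_of_mem (by norm_num : (0:ℝ) ∈ Set.Ico 0 1)] with s hs
        have : Real.log s ≠ 0 := ne_of_lt (Real.log_neg hs.1 hs.2)
        rw [div_self this]
      · exact tendsto_const_nhds
    · simp only [h0, if_false]
      have hpos : 0 < lam i := lt_of_le_of_ne (hlnn i) (Ne.symm h0)
      have h1 : Tendsto (fun s : ℝ => Real.log (lam i + s)) (𝓝[>] 0) (𝓝 (Real.log (lam i))) := by
        have : ContinuousAt (fun s : ℝ => Real.log (lam i + s)) 0 := by
          apply ContinuousAt.comp (Real.continuousAt_log (by simpa using ne_of_gt hpos))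
          fun_prop
        simpa using this.continuousWithinAt.tendsto
      have h2 : Tendsto (fun s : ℝ => (Real.log s)⁻¹) (𝓝[>] 0) (𝓝 0) := by
        have h2a : Tendsto (fun s : ℝ => -Real.log s) (𝓝[>] 0) atTop :=
          tendsto_neg_atBot_atTop.comp Real.tendsto_log_nhdsGT_zero
        have h2b := h2a.inv_tendsto_atTop
        have h2c := h2b.neg
        simpa [Function.comp, inv_neg, neg_neg, Pi.inv_def] using h2c
      have := h1.mul h2
      simpa [div_eq_mul_inv] using this
  convert hsum using 2
  rw [Finset.sum_boole]
  have hrank : B.rank = (Finset.univ.filter (fun i => ¬ lam i = 0)).card := by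
    rw [hB.1.rank_eq_card_non_zero_eigs, Fintype.card_subtype]
  have htot : (Finset.univ.filter (fun i => lam i = 0)).card
      + (Finset.univ.filter (fun i => ¬ lam i = 0)).card = M := by
    rw [Finset.card_filter_add_card_filter_not (fun i => lam i = 0)]
    simp
  have h := congrArg (Nat.cast : ℕ → ℝ) htot
  push_cast at h
  rw [hrank]
  linarith

lemma tendsto_inv_log : Tendsto (fun s : ℝ => (Real.log s)⁻¹) (𝓝[>] 0) (𝓝 0) := by
  have h2a : Tendsto (fun s : ℝ => -Real.log s) (𝓝[>] 0) atTop :=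
    tendsto_neg_atBot_atTop.comp Real.tendsto_log_nhdsGT_zero
  have h2c := h2a.inv_tendsto_atTop.neg
  simpa [Function.comp, inv_neg, neg_neg, Pi.inv_def] using h2c

lemma psd_sandwich {M N : ℕ} (Φ : Matrix (Fin M) (Fin N) ℝ) {S : Matrix (Fin N) (Fin N) ℝ}
    (hS : S.PosSemidef) : (Φ * S * Φᵀ).PosSemidef := by
  have := hS.mul_mul_conjTranspose_same Φ
  rwa [conjTranspose_eq_transpose_of_trivial] at this

/-- Theorem 1, diversity order: with zero-mean classes, if
`(r1 + r2)/2 < r12`, then `lim_{σ²→0⁺} log P̄_err(σ²) / log σ²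
= (2 r12 - r1 - r2)/4`. -/
theorem theorem1_diversity_order (M N : ℕ) (hM : 0 < M) (hN : 0 < N)
    (Φ : Matrix (Fin M) (Fin N) ℝ) (S1 S2 : Matrix (Fin N) (Fin N) ℝ)
    (hS1 : S1.PosSemidef) (hS2 : S2.PosSemidef) (μ1 μ2 : Fin N → ℝ)
    (hμ1 : μ1 = 0) (hμ2 : μ2 = 0)
    (P1 P2 : ℝ) (hP1 : 0 < P1) (hP2 : 0 < P2) (hP : P1 + P2 = 1)
    (hrank : (Φ * S1 * Φᵀ).rank + (Φ * S2 * Φᵀ).rank < 2 * (Φ * (S1 + S2) * Φᵀ).rank) :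
    Filter.Tendsto
      (fun s : ℝ => Real.log (Perr Φ S1 S2 μ1 μ2 P1 P2 s) / Real.log s) (𝓝[>] 0)
      (𝓝 ((2 * ((Φ * (S1 + S2) * Φᵀ).rank : ℝ) - ((Φ * S1 * Φᵀ).rank : ℝ)
        - ((Φ * S2 * Φᵀ).rank : ℝ)) / 4)) := by
  set A := Φ * (S1 + S2) * Φᵀ with hA
  set B1 := Φ * S1 * Φᵀ with hB1
  set B2 := Φ * S2 * Φᵀ with hB2
  have hpA : A.PosSemidef := psd_sandwich Φ (hS1.add hS2)
  have hpB1 : B1.PosSemidef := psd_sandwich Φ hS1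
  have hpB2 : B2.PosSemidef := psd_sandwich Φ hS2
  set c0 : ℝ := Real.log (Real.sqrt (P1 * P2)) - 1/2 * ((M : ℝ) * Real.log (1/2)) with hc0
  have hTA := tendsto_logdet hpA
  have hT1 := tendsto_logdet hpB1
  have hT2 := tendsto_logdet hpB2
  have hTc : Tendsto (fun s : ℝ => c0 * (Real.log s)⁻¹) (𝓝[>] 0) (𝓝 (c0 * 0)) :=
    tendsto_inv_log.const_mul c0
  have T := ((hTc.sub (hTA.const_mul (1/2))).add (hT1.const_mul (1/4))).add
    (hT2.const_mul (1/4))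
  have hval : c0 * 0 - 1/2 * ((M : ℝ) - A.rank) + 1/4 * ((M : ℝ) - B1.rank)
      + 1/4 * ((M : ℝ) - B2.rank)
      = (2 * (A.rank : ℝ) - (B1.rank : ℝ) - (B2.rank : ℝ)) / 4 := by ring
  rw [hval] at T
  apply T.congr'
  filter_upwards [self_mem_nhdsWithin] with s hs
  have hs' : (0:ℝ) < s := hs
  have hsI : (s • (1 : Matrix (Fin M) (Fin M) ℝ)).PosDef := by
    rw [Matrix.smul_one_eq_diagonal]
    exact Matrix.posDef_diagonal_iff.mpr (fun _ => hs')
  have hdA : 0 < (A + s • (1 : Matrix (Fin M) (Fin M) ℝ)).det :=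
    (Matrix.PosDef.posSemidef_add hpA hsI).det_pos
  have hd1 : 0 < (B1 + s • (1 : Matrix (Fin M) (Fin M) ℝ)).det :=
    (Matrix.PosDef.posSemidef_add hpB1 hsI).det_pos
  have hd2 : 0 < (B2 + s • (1 : Matrix (Fin M) (Fin M) ℝ)).det :=
    (Matrix.PosDef.posSemidef_add hpB2 hsI).det_pos
  have hKb : Kb Φ S1 S2 μ1 μ2 s = 1/2 * ((M : ℝ) * Real.log (1/2)
      + Real.log (A + s • (1 : Matrix (Fin M) (Fin M) ℝ)).det
      - (1/2 * Real.log (B1 + s • (1 : Matrix (Fin M) (Fin M) ℝ)).det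
        + 1/2 * Real.log (B2 + s • (1 : Matrix (Fin M) (Fin M) ℝ)).det)) := by
    rw [Kb, hμ1, hμ2]
    simp only [sub_self, Matrix.mulVec_zero, zero_dotProduct, dotProduct_zero,
      mul_zero, zero_add]
    rw [← hA, ← hB1, ← hB2]
    rw [Matrix.det_smul, Real.log_div (by positivity) (by positivity),
      Real.log_mul (by positivity) (ne_of_gt hdA), Real.log_pow,
      Real.log_sqrt (by positivity), Real.log_mul (ne_of_gt hd1) (ne_of_gt hd2)]
    simp only [Fintype.card_fin]
    push_cast
    ring
  have hlogP : Real.log (Perr Φ S1 S2 μ1 μ2 P1 P2 s)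
      = c0 - 1/2 * Real.log (A + s • (1 : Matrix (Fin M) (Fin M) ℝ)).det
        + 1/4 * Real.log (B1 + s • (1 : Matrix (Fin M) (Fin M) ℝ)).det
        + 1/4 * Real.log (B2 + s • (1 : Matrix (Fin M) (Fin M) ℝ)).det := by
    rw [Perr, Real.log_mul (by positivity) (Real.exp_ne_zero _), Real.log_exp, hKb, hc0]
    ring
  rw [hlogP]
  ring
end

section
/- (Almost-sure rank of the projected covariance.) Let Σ be a real symmetric positive semidefinite N×N matrix with rank(Σ) = ρ, and let the entries of the random M×N matrix Φ be i.i.d. standard Gaussian random variables (i.e., Φ is distributed according to the product over the M·N entries of the standard Gaussian measure on ℝ). Then, almost surely, rank(ΦΣΦᵀ) = min(M, ρ). -/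
open Matrix MeasureTheory ProbabilityTheory

/-- The zero set of a nonzero multivariate polynomial is null for any product of
probability measures absolutely continuous w.r.t. Lebesgue. -/
lemma eval_zero_set_null_fin (μ : Measure ℝ) [IsProbabilityMeasure μ] (hac : μ ≪ volume) :
    ∀ (n : ℕ) (p : MvPolynomial (Fin n) ℝ), p ≠ 0 →
      Measure.pi (fun _ : Fin n => μ) {x | MvPolynomial.eval x p = 0} = 0 := by
  intro n
  induction n with
  | zero =>
    intro p hp
    obtain ⟨c, rfl⟩ := MvPolynomial.C_surjective (Fin 0) p
    have hc : c ≠ 0 := fun h => hp (by simp [h])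
    have hset : {x : Fin 0 → ℝ | MvPolynomial.eval x (MvPolynomial.C c) = 0} = ∅ := by
      ext x; simp [hc]
    rw [show {x : Fin 0 → ℝ | MvPolynomial.eval x (MvPolynomial.C c) = 0} = ∅ from hset]
    simp
  | succ n ih =>
    intro p hp
    set q : Polynomial (MvPolynomial (Fin n) ℝ) := MvPolynomial.finSuccEquiv ℝ n p with hq
    have hq0 : q ≠ 0 := by
      simp only [hq, ne_eq, EmbeddingLike.map_eq_zero_iff]
      exact hp
    have hc0 : q.leadingCoeff ≠ 0 := Polynomial.leadingCoeff_ne_zero.mpr hq0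
    have hAmeas : MeasurableSet {x : Fin (n+1) → ℝ | MvPolynomial.eval x p = 0} :=
      (isClosed_singleton.preimage (MvPolynomial.continuous_eval p)).measurableSet
    have hmp := measurePreserving_piFinSuccAbove (fun _ : Fin (n+1) => μ) 0
    set e := MeasurableEquiv.piFinSuccAbove (fun _ : Fin (n+1) => ℝ) 0 with he
    have hSdef : e.symm ⁻¹' {x : Fin (n+1) → ℝ | MvPolynomial.eval x p = 0}
        = {z : ℝ × (Fin n → ℝ) |
            Polynomial.eval z.1 (q.map (MvPolynomial.eval z.2)) = 0} := by
      ext ⟨a, y⟩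
      have h1 : e.symm (a, y) = Fin.cons a y := by
        show (Fin.insertNthEquiv (fun _ : Fin (n+1) => ℝ) 0) (a, y) = Fin.cons a y
        simp [Fin.insertNthEquiv, Fin.insertNth_zero']
      simp only [Set.mem_preimage, Set.mem_setOf_eq, h1]
      rw [MvPolynomial.eval_eq_eval_mv_eval']
    have hSmeas : MeasurableSet (e.symm ⁻¹' {x : Fin (n+1) → ℝ | MvPolynomial.eval x p = 0}) :=
      e.symm.measurable hAmeas
    have h2 : (Measure.pi fun _ : Fin (n+1) => μ) {x | MvPolynomial.eval x p = 0}
        = (μ.prod (Measure.pi fun _ : Fin n => μ))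
            (e.symm ⁻¹' {x | MvPolynomial.eval x p = 0}) := by
      rw [← hmp.measure_preimage hSmeas.nullMeasurableSet]
      congr 1
      ext x
      simp
    rw [h2, hSdef]
    have hZ := ih q.leadingCoeff hc0
    have hae : ∀ᵐ y ∂(Measure.pi fun _ : Fin n => μ),
        MvPolynomial.eval y q.leadingCoeff ≠ 0 := by
      rw [ae_iff]
      simpa using hZ
    have hSmeas2 : MeasurableSet {z : ℝ × (Fin n → ℝ) |
        Polynomial.eval z.1 (q.map (MvPolynomial.eval z.2)) = 0} := by
      rw [← hSdef]; exact hSmeas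
    rw [Measure.prod_apply_symm hSmeas2]
    rw [← lintegral_zero]
    apply lintegral_congr_ae
    filter_upwards [hae] with y hy
    have hmapne : q.map (MvPolynomial.eval y) ≠ 0 := by
      intro h
      apply hy
      rw [Polynomial.leadingCoeff, ← Polynomial.coeff_map, h]
      simp
    have hfin : Set.Finite {a : ℝ | Polynomial.eval a (q.map (MvPolynomial.eval y)) = 0} :=
      Polynomial.finite_setOf_isRoot hmapne
    have hvol : volume {a : ℝ | Polynomial.eval a (q.map (MvPolynomial.eval y)) = 0} = 0 :=
      hfin.countable.measure_zero _
    have : (fun a : ℝ => (a, y)) ⁻¹' {z : ℝ × (Fin n → ℝ) |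
        Polynomial.eval z.1 (q.map (MvPolynomial.eval z.2)) = 0}
        = {a : ℝ | Polynomial.eval a (q.map (MvPolynomial.eval y)) = 0} := rfl
    rw [this]
    exact hac hvol

lemma eval_zero_set_null {ι : Type*} [Fintype ι] (μ : Measure ℝ) [IsProbabilityMeasure μ]
    (hac : μ ≪ volume) (p : MvPolynomial ι ℝ) (hp : p ≠ 0) :
    Measure.pi (fun _ : ι => μ) {x | MvPolynomial.eval x p = 0} = 0 := by
  classical
  let f' : Fin (Fintype.card ι) ≃ ι := (Fintype.equivFin ι).symm
  have hmp := measurePreserving_piCongrLeft (fun _ : ι => μ) f'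
  have hAmeas : MeasurableSet {x : ι → ℝ | MvPolynomial.eval x p = 0} :=
    (isClosed_singleton.preimage (MvPolynomial.continuous_eval p)).measurableSet
  rw [← hmp.measure_preimage hAmeas.nullMeasurableSet]
  have hpre : (⇑(MeasurableEquiv.piCongrLeft (fun _ : ι => ℝ) f')) ⁻¹'
      {x : ι → ℝ | MvPolynomial.eval x p = 0}
      = {y : Fin (Fintype.card ι) → ℝ |
          MvPolynomial.eval y (MvPolynomial.rename f'.symm p) = 0} := by
    ext y
    simp only [Set.mem_preimage, Set.mem_setOf_eq, MvPolynomial.eval_rename]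
    have : (MeasurableEquiv.piCongrLeft (fun _ : ι => ℝ) f') y = y ∘ f'.symm := by
      funext i
      have h := MeasurableEquiv.piCongrLeft_apply_apply (β := fun _ : ι => ℝ) f' y (f'.symm i)
      simpa using h
    rw [this]
  rw [hpre]
  have hren : MvPolynomial.rename f'.symm p ≠ 0 := by
    intro h
    have hinj := MvPolynomial.rename_injective (R := ℝ) (⇑f'.symm) f'.symm.injective
    exact hp (hinj (by rw [h, map_zero]))
  exact eval_zero_set_null_fin μ hac _ _ hren

lemma curry_measurePreserving {M N : ℕ} (μ : Measure ℝ) [IsProbabilityMeasure μ] :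
    MeasurePreserving (fun (f : Fin M → Fin N → ℝ) (p : Fin M × Fin N) => f p.1 p.2)
      (Measure.pi fun _ : Fin M => Measure.pi fun _ : Fin N => μ)
      (Measure.pi fun _ : Fin M × Fin N => μ) := by
  have hmeas : Measurable (fun (f : Fin M → Fin N → ℝ) (p : Fin M × Fin N) => f p.1 p.2) :=
    measurable_pi_lambda _ fun p => (measurable_pi_apply p.2).comp (measurable_pi_apply p.1)
  refine ⟨hmeas, ?_⟩
  refine (Measure.pi_eq fun s hs => ?_).symm
  rw [Measure.map_apply hmeas (MeasurableSet.univ_pi hs)]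
  have hpre : (fun (f : Fin M → Fin N → ℝ) (p : Fin M × Fin N) => f p.1 p.2) ⁻¹'
      (Set.pi Set.univ s) = Set.pi Set.univ fun i : Fin M => Set.pi Set.univ fun j => s (i, j) := by
    ext f
    simp [Set.mem_pi, Prod.forall]
  rw [hpre, Measure.pi_pi]
  simp_rw [Measure.pi_pi]
  rw [← Finset.prod_product']
  rfl

lemma submatrix_conj_eq {M r : ℕ} (emb : Fin r → Fin M) (A : Matrix (Fin M) (Fin M) ℝ) :
    A.submatrix emb emb =
      ((1 : Matrix (Fin M) (Fin M) ℝ).submatrix emb id) * A *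
      ((1 : Matrix (Fin M) (Fin M) ℝ).submatrix emb id)ᵀ := by
  ext i j
  simp [Matrix.mul_apply, Matrix.one_apply, ite_and]

lemma rank_submatrix_le' {M r : ℕ} (emb : Fin r → Fin M) (A : Matrix (Fin M) (Fin M) ℝ) :
    (A.submatrix emb emb).rank ≤ A.rank := by
  rw [submatrix_conj_eq emb A]
  exact le_trans (Matrix.rank_mul_le_left _ _) (Matrix.rank_mul_le_right _ _)

section SqrtCompat
open scoped MatrixOrder

noncomputable def Matrix.PosSemidef.sqrt {n : Type*} [Fintype n] [DecidableEq n]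
    {A : Matrix n n ℝ} (_hA : A.PosSemidef) : Matrix n n ℝ := CFC.sqrt A

theorem Matrix.PosSemidef.posSemidef_sqrt {n : Type*} [Fintype n] [DecidableEq n]
    {A : Matrix n n ℝ} (hA : A.PosSemidef) : hA.sqrt.PosSemidef :=
  (CFC.sqrt_nonneg A).posSemidef

theorem Matrix.PosSemidef.sqrt_mul_self {n : Type*} [Fintype n] [DecidableEq n]
    {A : Matrix n n ℝ} (hA : A.PosSemidef) : hA.sqrt * hA.sqrt = A :=
  CFC.sqrt_mul_sqrt_self A hA.nonneg

end SqrtCompat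

lemma conj_sqrt {N m : ℕ} {S : Matrix (Fin N) (Fin N) ℝ} (hS : S.PosSemidef)
    (F : Matrix (Fin m) (Fin N) ℝ) :
    F * S * Fᵀ = (F * hS.sqrt) * (F * hS.sqrt)ᵀ := by
  have hBsym : hS.sqrt ᵀ = hS.sqrt := by
    have := hS.posSemidef_sqrt.1.eq
    rwa [Matrix.conjTranspose_eq_transpose_of_trivial] at this
  rw [Matrix.transpose_mul, hBsym, ← Matrix.mul_assoc,
    Matrix.mul_assoc F hS.sqrt hS.sqrt, hS.sqrt_mul_self]

lemma rank_sqrt {N : ℕ} {S : Matrix (Fin N) (Fin N) ℝ} (hS : S.PosSemidef) :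
    hS.sqrt.rank = S.rank := by
  have hBsym : hS.sqrt ᵀ = hS.sqrt := by
    have := hS.posSemidef_sqrt.1.eq
    rwa [Matrix.conjTranspose_eq_transpose_of_trivial] at this
  conv_rhs => rw [← hS.sqrt_mul_self]
  nth_rewrite 2 [← hBsym]
  rw [Matrix.rank_transpose_mul_self]

lemma rank_conj_le {M N : ℕ} {S : Matrix (Fin N) (Fin N) ℝ} (hS : S.PosSemidef) {ρ : ℕ}
    (hρ : S.rank = ρ) (F : Matrix (Fin M) (Fin N) ℝ) :
    (F * S * Fᵀ).rank ≤ min M ρ := by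
  rw [conj_sqrt hS F, Matrix.rank_self_mul_transpose]
  refine le_min ?_ ?_
  · exact le_trans (Matrix.rank_le_card_height _) (by simp)
  · refine le_trans (Matrix.rank_mul_le_right _ _) ?_
    rw [rank_sqrt hS, hρ]

lemma det_ne_zero_of_rank_eq {r : ℕ} (A : Matrix (Fin r) (Fin r) ℝ) (h : A.rank = r) :
    A.det ≠ 0 := by
  have hrange : LinearMap.range A.mulVecLin = ⊤ := by
    apply Submodule.eq_top_of_finrank_eq
    rw [← Matrix.rank, h]
    simp [Module.finrank_pi]
  have hsurj : Function.Surjective A.mulVec := by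
    have h2 := LinearMap.range_eq_top.mp hrange
    intro y
    obtain ⟨x, hx⟩ := h2 y
    exact ⟨x, by simpa using hx⟩
  have : IsUnit A := Matrix.mulVec_surjective_iff_isUnit.mp hsurj
  exact IsUnit.ne_zero ((Matrix.isUnit_iff_isUnit_det A).mp this)

lemma exists_good {N : ℕ} {S : Matrix (Fin N) (Fin N) ℝ} (hS : S.PosSemidef) {ρ r : ℕ}
    (hρ : S.rank = ρ) (hr : r ≤ ρ) :
    ∃ E : Matrix (Fin r) (Fin N) ℝ, (E * S * Eᵀ).det ≠ 0 := by
  set B := hS.sqrt with hBdef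
  have hBsym : Bᵀ = B := by
    have := hS.posSemidef_sqrt.1.eq
    rwa [Matrix.conjTranspose_eq_transpose_of_trivial] at this
  have hrankB : B.rank = ρ := by rw [rank_sqrt hS, hρ]
  have hfr : Module.finrank ℝ (LinearMap.range B.mulVecLin) = ρ := hrankB
  let b : Module.Basis (Fin ρ) ℝ (LinearMap.range B.mulVecLin) :=
    (Module.finBasis ℝ _).reindex (finCongr hfr)
  let v : Fin r → (Fin N → ℝ) := fun i => (b (Fin.castLE hr i) : Fin N → ℝ)
  have hvind : LinearIndependent ℝ v := by
    have h1 : LinearIndependent ℝ (fun i : Fin r => b (Fin.castLE hr i)) :=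
      b.linearIndependent.comp _ (Fin.castLE_injective hr)
    exact h1.map' (Submodule.subtype _) (Submodule.ker_subtype _)
  have hmem : ∀ i, v i ∈ LinearMap.range B.mulVecLin := fun i => (b (Fin.castLE hr i)).2
  choose u hu using fun i => hmem i
  let E : Matrix (Fin r) (Fin N) ℝ := Matrix.of u
  have hEB : E * B = Matrix.of v := by
    ext i j
    have h1 := congrFun (hu i) j
    simp only [Matrix.mulVecLin_apply, Matrix.mulVec, dotProduct] at h1
    rw [Matrix.mul_apply]
    show ∑ k, u i k * B k j = Matrix.of v i j
    rw [Matrix.of_apply, ← h1]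
    refine Finset.sum_congr rfl fun k _ => ?_
    rw [mul_comm]
    congr 1
    exact (congrFun (congrFun hBsym k) j).symm
  have hrankEB : (E * B).rank = r := by
    rw [hEB]
    have : LinearIndependent ℝ (Matrix.of v) := hvind
    simpa using this.rank_matrix
  have hrk : (E * S * Eᵀ).rank = r := by
    rw [conj_sqrt hS E, Matrix.rank_self_mul_transpose, ← hBdef, hrankEB]
  exact ⟨E, det_ne_zero_of_rank_eq _ hrk⟩

/-- Almost-sure rank of the projected covariance: if `Σ` is a real symmetric
positive semidefinite `N × N` matrix of rank `ρ` and the entries of the random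
`M × N` matrix `Φ` are i.i.d. standard Gaussians (product measure of standard
Gaussian measures over the `M·N` entries), then almost surely
`rank (Φ Σ Φᵀ) = min M ρ`. -/
theorem rank_proj_covariance_ae (M N : ℕ) (hM : 0 < M) (hN : 0 < N)
    (S : Matrix (Fin N) (Fin N) ℝ) (hS : S.PosSemidef) (ρ : ℕ) (hρ : S.rank = ρ) :
    ∀ᵐ f ∂(Measure.pi fun _ : Fin M => Measure.pi fun _ : Fin N => gaussianReal 0 1),
      ((Matrix.of f) * S * (Matrix.of f)ᵀ).rank = min M ρ := by
  classical
  set r := min M ρ with hrdef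
  have hrM : r ≤ M := min_le_left _ _
  have hrρ : r ≤ ρ := min_le_right _ _
  set emb : Fin r → Fin M := Fin.castLE hrM with hembdef
  set X : Matrix (Fin M) (Fin N) (MvPolynomial (Fin M × Fin N) ℝ) :=
    Matrix.of fun i j => MvPolynomial.X (i, j) with hXdef
  set q : MvPolynomial (Fin M × Fin N) ℝ :=
    (((X * (S.map MvPolynomial.C : Matrix (Fin N) (Fin N) (MvPolynomial (Fin M × Fin N) ℝ)) : Matrix (Fin M) (Fin N) (MvPolynomial (Fin M × Fin N) ℝ)) * Xᵀ : Matrix (Fin M) (Fin M) (MvPolynomial (Fin M × Fin N) ℝ)).submatrix emb emb).det with hqdef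
  have eval_q : ∀ x : Fin M × Fin N → ℝ,
      MvPolynomial.eval x q =
        (((Matrix.of fun i j => x (i, j)) * S * (Matrix.of fun i j => x (i, j))ᵀ).submatrix
          emb emb).det := by
    intro x
    rw [hqdef, RingHom.map_det (MvPolynomial.eval x : MvPolynomial (Fin M × Fin N) ℝ →+* ℝ)]
    congr 1
    ext i j
    simp [Matrix.mul_apply, Finset.sum_mul, map_sum, hXdef]
  -- q is a nonzero polynomial
  obtain ⟨E, hE⟩ := exists_good hS hρ hrρ
  have hq0 : q ≠ 0 := by
    intro h
    apply hE
    set F0 : Matrix (Fin M) (Fin N) ℝ :=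
      Matrix.of fun i j => if hij : (i : ℕ) < r then E ⟨i, hij⟩ j else 0 with hF0def
    have hF0 : ∀ (i : Fin r) (k : Fin N), F0 (emb i) k = E i k := by
      intro i k
      rw [hF0def]
      simp only [Matrix.of_apply]
      rw [dif_pos (show ((emb i : Fin M) : ℕ) < r from i.isLt)]
      exact congrFun (congrArg E (Fin.ext rfl)) k
    have hsub : (F0 * S * F0ᵀ).submatrix emb emb = E * S * Eᵀ := by
      ext i j
      simp [Matrix.mul_apply, hF0, Finset.sum_mul]
    have := eval_q (fun p => F0 p.1 p.2)
    rw [h] at this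
    simp only [map_zero] at this
    have hF0eq : (Matrix.of fun i j => F0 (i, j).1 (i, j).2) = F0 := rfl
    rw [hF0eq, hsub] at this
    exact this.symm
  -- the bad event is contained in the zero set of q
  have hsubset : {f : Fin M → Fin N → ℝ |
        ¬ ((Matrix.of f) * S * (Matrix.of f)ᵀ).rank = r} ⊆
      {f : Fin M → Fin N → ℝ | MvPolynomial.eval (fun p => f p.1 p.2) q = 0} := by
    intro f hf
    by_contra hne
    apply hf
    have hub := rank_conj_le hS hρ (Matrix.of f)
    have heval := eval_q (fun p => f p.1 p.2)
    have hFeq : (Matrix.of fun i j => f i j) = Matrix.of f := rfl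
    rw [hFeq] at heval
    set A := (Matrix.of f) * S * (Matrix.of f)ᵀ with hAdef
    have hdet : (A.submatrix emb emb).det ≠ 0 := by
      rw [← heval]; exact hne
    have hunit : IsUnit (A.submatrix emb emb) :=
      (Matrix.isUnit_iff_isUnit_det _).mpr (isUnit_iff_ne_zero.mpr hdet)
    have hrankD : (A.submatrix emb emb).rank = r := by
      rw [Matrix.rank_of_isUnit _ hunit, Fintype.card_fin]
    have hlb : r ≤ A.rank := hrankD ▸ rank_submatrix_le' emb A
    exact le_antisymm hub hlb
  -- measure of the zero set is zero
  rw [ae_iff]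
  apply measure_mono_null hsubset
  have hmp := curry_measurePreserving (M := M) (N := N) (gaussianReal 0 1)
  have hAmeas : MeasurableSet {x : Fin M × Fin N → ℝ | MvPolynomial.eval x q = 0} :=
    (isClosed_singleton.preimage (MvPolynomial.continuous_eval q)).measurableSet
  have hpre : {f : Fin M → Fin N → ℝ | MvPolynomial.eval (fun p => f p.1 p.2) q = 0}
      = (fun (f : Fin M → Fin N → ℝ) (p : Fin M × Fin N) => f p.1 p.2) ⁻¹'
        {x : Fin M × Fin N → ℝ | MvPolynomial.eval x q = 0} := rfl
  rw [hpre, hmp.measure_preimage hAmeas.nullMeasurableSet]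
  exact eval_zero_set_null (gaussianReal 0 1)
    (gaussianReal_absolutelyContinuous 0 (by norm_num)) q hq0
end

section
/- (Theorem 2, case ρ2 < M < ρ12.) Assume μ1 = μ2 = 0, let ρ1 = rank(Σ1), ρ2 = rank(Σ2), ρ12 = rank(Σ1 + Σ2), assume ρ1 ≤ ρ2 ≤ ρ12, and assume the rank relations r1 = min(M, ρ1), r2 = min(M, ρ2), r12 = min(M, ρ12). If ρ2 < M < ρ12, then lim_{σ² → 0+} log P̄_err(σ²) / log σ² = (2M − ρ1 − ρ2)/4; i.e., the diversity order is d = −(1/2)·((ρ1 + ρ2)/2 − M) = (2M − ρ1 − ρ2)/4. -/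
open Matrix MeasureTheory Filter Real Topology

lemma aux_log_det {m : ℕ} {A : Matrix (Fin m) (Fin m) ℝ} (hA : A.PosSemidef) :
    ∃ g : ℝ → ℝ, Filter.Tendsto g (𝓝[>] 0) (𝓝 (g 0)) ∧
      ∀ s : ℝ, 0 < s →
        Real.log (A + s • (1 : Matrix (Fin m) (Fin m) ℝ)).det
          = g s + ((m : ℝ) - A.rank) * Real.log s ∧
        0 < (A + s • (1 : Matrix (Fin m) (Fin m) ℝ)).det := by
  classical
  set lam := hA.1.eigenvalues with hlam
  set T : Finset (Fin m) := Finset.univ.filter (fun i => lam i ≠ 0) with hT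
  have hlampos : ∀ i ∈ T, 0 < lam i := by
    intro i hi
    rw [hT, Finset.mem_filter] at hi
    exact lt_of_le_of_ne (hA.eigenvalues_nonneg i) (Ne.symm hi.2)
  refine ⟨fun s => ∑ i ∈ T, Real.log (lam i + s), ?_, ?_⟩
  · have : ∀ i ∈ T, Filter.Tendsto (fun s : ℝ => Real.log (lam i + s)) (𝓝[>] 0)
        (𝓝 (Real.log (lam i + 0))) := by
      intro i hi
      have hpos := hlampos i hi
      have hc : ContinuousAt (fun s : ℝ => Real.log (lam i + s)) 0 := by
        exact (Real.continuousAt_log (by positivity)).comp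
          (continuousAt_const.add continuousAt_id)
      exact hc.tendsto.mono_left nhdsWithin_le_nhds
    exact tendsto_finset_sum T this
  · intro s hs
    have hdet := det_add_smul_one hA.1 s
    have hrank : A.rank = T.card := by
      rw [hA.1.rank_eq_card_non_zero_eigs, Fintype.card_subtype]
    have hrankle : A.rank ≤ m := by
      rw [hrank]
      exact le_trans (Finset.card_filter_le _ _) (by simp)
    have hc : T.card + (Finset.univ.filter (fun i => ¬ lam i ≠ 0)).card = m := by
      rw [hT]
      simpa using Finset.card_filter_add_card_filter_not
        (s := (Finset.univ : Finset (Fin m))) (p := fun i : Fin m => lam i ≠ 0)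
    have hprodc : ∏ i ∈ Finset.univ.filter (fun i => ¬ lam i ≠ 0), (lam i + s)
        = s ^ (m - A.rank) := by
      have hz : ∀ i ∈ Finset.univ.filter (fun i => ¬ lam i ≠ 0), (lam i + s) = s := by
        intro i hi
        rw [Finset.mem_filter] at hi
        have h2 := hi.2
        simp only [not_not] at h2
        rw [h2, zero_add]
      rw [Finset.prod_congr rfl hz, Finset.prod_const]
      congr 1
      omega
    have hsplit : (∏ i, (lam i + s)) = (∏ i ∈ T, (lam i + s)) * s ^ (m - A.rank) := by
      rw [← Finset.prod_filter_mul_prod_filter_not Finset.univ (fun i => lam i ≠ 0), hprodc]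
    have hTpos : ∀ i ∈ T, 0 < lam i + s := fun i hi => by
      have := hlampos i hi; linarith
    have hprodpos : 0 < ∏ i ∈ T, (lam i + s) := Finset.prod_pos hTpos
    have hdetpos : 0 < (A + s • (1 : Matrix (Fin m) (Fin m) ℝ)).det := by
      rw [hdet, hsplit]
      positivity
    refine ⟨?_, hdetpos⟩
    rw [hdet, hsplit, Real.log_mul (ne_of_gt hprodpos) (by positivity),
      Real.log_pow, Real.log_prod (fun i hi => ne_of_gt (hTpos i hi))]
    congr 1
    rw [Nat.cast_sub hrankle]

set_option maxHeartbeats 1000000 in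
/-- Theorem 2, case ρ2 < M < ρ12: the diversity order is (2M - ρ1 - ρ2)/4. -/
theorem theorem2_case_rho2_lt_M_lt_rho12 (M N : ℕ) (hM : 0 < M) (hN : 0 < N)
    (Φ : Matrix (Fin M) (Fin N) ℝ) (S1 S2 : Matrix (Fin N) (Fin N) ℝ)
    (hS1 : S1.PosSemidef) (hS2 : S2.PosSemidef) (μ1 μ2 : Fin N → ℝ)
    (hμ1 : μ1 = 0) (hμ2 : μ2 = 0)
    (P1 P2 : ℝ) (hP1 : 0 < P1) (hP2 : 0 < P2) (hP : P1 + P2 = 1)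
    (hρa : S1.rank ≤ S2.rank) (hρb : S2.rank ≤ (S1 + S2).rank)
    (hr1 : (Φ * S1 * Φᵀ).rank = min M S1.rank)
    (hr2 : (Φ * S2 * Φᵀ).rank = min M S2.rank)
    (hr12 : (Φ * (S1 + S2) * Φᵀ).rank = min M (S1 + S2).rank)
    (hcase1 : S2.rank < M) (hcase2 : M < (S1 + S2).rank) :
    Filter.Tendsto
      (fun s : ℝ => Real.log (Perr Φ S1 S2 μ1 μ2 P1 P2 s) / Real.log s) (𝓝[>] 0)
      (𝓝 ((2 * (M : ℝ) - (S1.rank : ℝ) - (S2.rank : ℝ)) / 4)) := by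
  subst hμ1 hμ2
  have hT : Φᵀ = Φᴴ := by
    ext i j; simp [Matrix.conjTranspose_apply]
  have hPSD1 : (Φ * S1 * Φᵀ).PosSemidef := by
    rw [hT]; exact hS1.mul_mul_conjTranspose_same Φ
  have hPSD2 : (Φ * S2 * Φᵀ).PosSemidef := by
    rw [hT]; exact hS2.mul_mul_conjTranspose_same Φ
  have hPSD12 : (Φ * (S1 + S2) * Φᵀ).PosSemidef := by
    rw [hT]; exact (hS1.add hS2).mul_mul_conjTranspose_same Φ
  obtain ⟨g1, hg1t, hg1⟩ := aux_log_det hPSD1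
  obtain ⟨g2, hg2t, hg2⟩ := aux_log_det hPSD2
  obtain ⟨g12, hg12t, hg12⟩ := aux_log_det hPSD12
  set r1 : ℝ := ((Φ * S1 * Φᵀ).rank : ℝ) with hr1d
  set r2 : ℝ := ((Φ * S2 * Φᵀ).rank : ℝ) with hr2d
  set r12 : ℝ := ((Φ * (S1 + S2) * Φᵀ).rank : ℝ) with hr12d
  set D : ℝ := -(1/2) * ((M : ℝ) - r12) + (1/4) * ((M : ℝ) - r1) + (1/4) * ((M : ℝ) - r2)
    with hD
  set C : ℝ → ℝ := fun s =>
    Real.log (Real.sqrt (P1 * P2)) - (1/2) * ((M : ℝ) * Real.log (1/2))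
      - (1/2) * g12 s + (1/4) * g1 s + (1/4) * g2 s with hC
  -- pointwise identity for s > 0
  have hkey : ∀ s : ℝ, 0 < s →
      Real.log (Perr Φ S1 S2 0 0 P1 P2 s) = C s + D * Real.log s := by
    intro s hs
    obtain ⟨h1eq, h1pos⟩ := hg1 s hs
    obtain ⟨h2eq, h2pos⟩ := hg2 s hs
    obtain ⟨h12eq, h12pos⟩ := hg12 s hs
    have hsqrtP : (0:ℝ) < Real.sqrt (P1 * P2) := Real.sqrt_pos.mpr (by positivity)
    have hKbeq : Kb Φ S1 S2 0 0 s =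
        1/2 * Real.log (((1/2:ℝ)^M * (Φ * (S1 + S2) * Φᵀ + s • (1 : Matrix (Fin M) (Fin M) ℝ)).det) /
          Real.sqrt ((Φ * S1 * Φᵀ + s • (1 : Matrix (Fin M) (Fin M) ℝ)).det *
            (Φ * S2 * Φᵀ + s • (1 : Matrix (Fin M) (Fin M) ℝ)).det)) := by
      rw [Kb]
      simp only [sub_self, Matrix.mulVec_zero, zero_dotProduct, mul_zero, zero_add,
        dotProduct_zero]
      rw [Matrix.det_smul]
      simp only [Fintype.card_fin]
    rw [Perr, Real.log_mul (ne_of_gt hsqrtP) (Real.exp_ne_zero _), Real.log_exp, hKbeq]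
    have hmulpos : (0:ℝ) < (Φ * S1 * Φᵀ + s • (1 : Matrix (Fin M) (Fin M) ℝ)).det *
        (Φ * S2 * Φᵀ + s • (1 : Matrix (Fin M) (Fin M) ℝ)).det := mul_pos h1pos h2pos
    rw [Real.log_div (by positivity) (ne_of_gt (Real.sqrt_pos.mpr hmulpos)),
      Real.log_mul (by positivity) (ne_of_gt h12pos), Real.log_pow,
      Real.log_sqrt hmulpos.le, Real.log_mul (ne_of_gt h1pos) (ne_of_gt h2pos),
      h1eq, h2eq, h12eq, hC, hD]
    ring
  -- the limit of the auxiliary expression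
  have hlog : Tendsto (fun s : ℝ => (Real.log s)⁻¹) (𝓝[>] (0:ℝ)) (𝓝 0) := by
    have h := (tendsto_inv_atTop_zero.comp
      (tendsto_neg_atBot_atTop.comp Real.tendsto_log_nhdsGT_zero)).neg
    rw [neg_zero] at h
    refine h.congr fun s => ?_
    simp [Function.comp, inv_neg]
  have hCt : Tendsto C (𝓝[>] (0:ℝ)) (𝓝 (C 0)) := by
    rw [hC]
    exact ((((tendsto_const_nhds (x := Real.log (Real.sqrt (P1 * P2))
        - (1/2) * ((M : ℝ) * Real.log (1/2)))).sub
      (hg12t.const_mul (1/2))).add (hg1t.const_mul (1/4))).add (hg2t.const_mul (1/4))).congr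
      (fun s => by ring)
  have hmain : Tendsto (fun s : ℝ => C s * (Real.log s)⁻¹ + D) (𝓝[>] (0:ℝ))
      (𝓝 (C 0 * 0 + D)) := (hCt.mul hlog).add tendsto_const_nhds
  -- eventual equality
  have hev : ∀ᶠ s in 𝓝[>] (0:ℝ),
      C s * (Real.log s)⁻¹ + D = Real.log (Perr Φ S1 S2 0 0 P1 P2 s) / Real.log s := by
    filter_upwards [self_mem_nhdsWithin,
      Ioo_mem_nhdsGT_of_mem (by norm_num : (0:ℝ) ∈ Set.Ico (0:ℝ) 1)] with s hs hs1
    have hlogne : Real.log s ≠ 0 := ne_of_lt (Real.log_neg hs hs1.2)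
    rw [hkey s hs, add_div, mul_div_cancel_right₀ _ hlogne, div_eq_mul_inv]
  -- identify the limit value
  have hrv1 : r1 = (S1.rank : ℝ) := by
    rw [hr1d, hr1, min_eq_right (le_of_lt (lt_of_le_of_lt hρa hcase1))]
  have hrv2 : r2 = (S2.rank : ℝ) := by
    rw [hr2d, hr2, min_eq_right hcase1.le]
  have hrv12 : r12 = (M : ℝ) := by
    rw [hr12d, hr12, min_eq_left hcase2.le]
  have hval : C 0 * 0 + D = (2 * (M : ℝ) - (S1.rank : ℝ) - (S2.rank : ℝ)) / 4 := by
    rw [mul_zero, zero_add, hD, hrv1, hrv2, hrv12]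
    ring
  rw [← hval]
  exact hmain.congr' hev
end

section
/- (Theorem 3, exponential decay case.) Let C = Φ(Σ1+Σ2)Φᵀ and w = Φ(μ1−μ2), and suppose w does not belong to the column space of C (this is equivalent to condition im(Φ(μ1−μ2)(μ1−μ2)ᵀΦᵀ) ⊄ im(Φ(Σ1+Σ2)Φᵀ)). Let v denote the orthogonal projection of w onto ker C (which equals the orthogonal complement of the column space of C since C is symmetric); then v ≠ 0 and lim_{σ² → 0+} σ² · log P̄_err(σ²) = −‖v‖²/4 < 0. In particular the Bhattacharyya upper bound decays exponentially in 1/σ² as σ² → 0. -/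
open Matrix MeasureTheory Filter Real Topology

variable {m : ℕ}

lemma spec_add (A : Matrix (Fin m) (Fin m) ℝ) (hA : A.IsHermitian) (s : ℝ) :
    A + s • (1 : Matrix (Fin m) (Fin m) ℝ) =
      (hA.eigenvectorUnitary : Matrix (Fin m) (Fin m) ℝ) *
        diagonal (fun i => hA.eigenvalues i + s) *
        (star hA.eigenvectorUnitary : Matrix (Fin m) (Fin m) ℝ) := by
  have h1 : (s • (1 : Matrix (Fin m) (Fin m) ℝ)) =
      (hA.eigenvectorUnitary : Matrix (Fin m) (Fin m) ℝ) * (s • 1) *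
        (star hA.eigenvectorUnitary : Matrix (Fin m) (Fin m) ℝ) := by
    rw [Matrix.mul_smul, Matrix.smul_mul, mul_one,
      (Matrix.mem_unitaryGroup_iff).mp hA.eigenvectorUnitary.2]
  conv_lhs => rw [hA.spectral_theorem, Unitary.conjStarAlgAut_apply, h1]
  rw [← Matrix.add_mul, ← Matrix.mul_add]
  congr 2
  rw [smul_one_eq_diagonal, diagonal_add]
  rfl

lemma det_UDU (A : Matrix (Fin m) (Fin m) ℝ) (hA : A.IsHermitian) (d : Fin m → ℝ) :
    ((hA.eigenvectorUnitary : Matrix (Fin m) (Fin m) ℝ) * diagonal d *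
      (star hA.eigenvectorUnitary : Matrix (Fin m) (Fin m) ℝ)).det = ∏ i, d i := by
  rw [det_mul_right_comm, (Matrix.mem_unitaryGroup_iff).mp hA.eigenvectorUnitary.2, one_mul,
    det_diagonal]

lemma det_add_smul (A : Matrix (Fin m) (Fin m) ℝ) (hA : A.IsHermitian) (s : ℝ) :
    (A + s • (1 : Matrix (Fin m) (Fin m) ℝ)).det = ∏ i, (hA.eigenvalues i + s) := by
  rw [spec_add A hA s, det_UDU]

-- inverse of scaled shift
lemma inv_half (A : Matrix (Fin m) (Fin m) ℝ) (hA : A.IsHermitian) (s : ℝ)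
    (hd : ∀ i, hA.eigenvalues i + s ≠ 0) :
    ((1/2 : ℝ) • (A + s • (1 : Matrix (Fin m) (Fin m) ℝ)))⁻¹ =
      (hA.eigenvectorUnitary : Matrix (Fin m) (Fin m) ℝ) *
        diagonal (fun i => ((hA.eigenvalues i + s) / 2)⁻¹) *
        (star hA.eigenvectorUnitary : Matrix (Fin m) (Fin m) ℝ) := by
  apply Matrix.inv_eq_right_inv
  set U : Matrix (Fin m) (Fin m) ℝ := (hA.eigenvectorUnitary : Matrix (Fin m) (Fin m) ℝ) with hU
  rw [spec_add A hA s, Matrix.smul_mul]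
  have assoc : (U * diagonal (fun i => hA.eigenvalues i + s) * star U) *
      (U * diagonal (fun i => ((hA.eigenvalues i + s) / 2)⁻¹) * star U)
      = U * (diagonal (fun i => hA.eigenvalues i + s) * (star U * U) *
          diagonal (fun i => ((hA.eigenvalues i + s) / 2)⁻¹)) * star U := by
    simp only [Matrix.mul_assoc]
  rw [assoc, (Matrix.mem_unitaryGroup_iff').mp hA.eigenvectorUnitary.2, mul_one,
    diagonal_mul_diagonal]
  have hdd : (fun i => (hA.eigenvalues i + s) * ((hA.eigenvalues i + s) / 2)⁻¹) =
      fun _ : Fin m => (2 : ℝ) := by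
    funext i
    have := hd i
    field_simp
  rw [hdd, ← smul_one_eq_diagonal, Matrix.mul_smul, Matrix.smul_mul, mul_one,
    (Matrix.mem_unitaryGroup_iff).mp hA.eigenvectorUnitary.2, smul_smul]
  norm_num

lemma starU_eq (A : Matrix (Fin m) (Fin m) ℝ) (hA : A.IsHermitian) :
    (star hA.eigenvectorUnitary : Matrix (Fin m) (Fin m) ℝ) =
      (hA.eigenvectorUnitary : Matrix (Fin m) (Fin m) ℝ)ᵀ := by
  ext i j
  simp [Matrix.star_apply]

lemma dot_U_mulVec (A : Matrix (Fin m) (Fin m) ℝ) (hA : A.IsHermitian)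
    (w y : Fin m → ℝ) :
    w ⬝ᵥ ((hA.eigenvectorUnitary : Matrix (Fin m) (Fin m) ℝ) *ᵥ y) =
      ((star hA.eigenvectorUnitary : Matrix (Fin m) (Fin m) ℝ) *ᵥ w) ⬝ᵥ y := by
  rw [starU_eq, Matrix.mulVec_transpose, ← Matrix.dotProduct_mulVec]

lemma quad_UDU (A : Matrix (Fin m) (Fin m) ℝ) (hA : A.IsHermitian)
    (d : Fin m → ℝ) (w : Fin m → ℝ) :
    w ⬝ᵥ (((hA.eigenvectorUnitary : Matrix (Fin m) (Fin m) ℝ) * diagonal d *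
      (star hA.eigenvectorUnitary : Matrix (Fin m) (Fin m) ℝ)) *ᵥ w) =
    ∑ i, d i * (((star hA.eigenvectorUnitary : Matrix (Fin m) (Fin m) ℝ) *ᵥ w) i)^2 := by
  rw [← Matrix.mulVec_mulVec, ← Matrix.mulVec_mulVec, dot_U_mulVec]
  simp [dotProduct, Matrix.mulVec_diagonal]
  congr 1; funext i; ring

lemma coord_mulVec (A : Matrix (Fin m) (Fin m) ℝ) (hA : A.IsHermitian) (x : Fin m → ℝ) :
    (star hA.eigenvectorUnitary : Matrix (Fin m) (Fin m) ℝ) *ᵥ (A *ᵥ x) =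
      fun i => hA.eigenvalues i *
        (((star hA.eigenvectorUnitary : Matrix (Fin m) (Fin m) ℝ) *ᵥ x) i) := by
  have h : (star hA.eigenvectorUnitary : Matrix (Fin m) (Fin m) ℝ) * A =
      diagonal (RCLike.ofReal ∘ hA.eigenvalues) *
        (star hA.eigenvectorUnitary : Matrix (Fin m) (Fin m) ℝ) := by
    calc (star hA.eigenvectorUnitary : Matrix (Fin m) (Fin m) ℝ) * A
        = (star hA.eigenvectorUnitary : Matrix (Fin m) (Fin m) ℝ) *
          ((hA.eigenvectorUnitary : Matrix (Fin m) (Fin m) ℝ) *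
            diagonal (RCLike.ofReal ∘ hA.eigenvalues) *
            (star hA.eigenvectorUnitary : Matrix (Fin m) (Fin m) ℝ)) := by
          rw [← Unitary.conjStarAlgAut_apply (S := ℝ), ← hA.spectral_theorem]
      _ = ((star hA.eigenvectorUnitary : Matrix (Fin m) (Fin m) ℝ) *
            (hA.eigenvectorUnitary : Matrix (Fin m) (Fin m) ℝ)) *
          diagonal (RCLike.ofReal ∘ hA.eigenvalues) *
          (star hA.eigenvectorUnitary : Matrix (Fin m) (Fin m) ℝ) := by
          simp only [Matrix.mul_assoc]
      _ = _ := by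
          rw [(Matrix.mem_unitaryGroup_iff').mp hA.eigenvectorUnitary.2, one_mul]
  rw [Matrix.mulVec_mulVec, h, ← Matrix.mulVec_mulVec]
  funext i
  simp [Matrix.mulVec_diagonal]

lemma parseval (A : Matrix (Fin m) (Fin m) ℝ) (hA : A.IsHermitian) (x : Fin m → ℝ) :
    ((star hA.eigenvectorUnitary : Matrix (Fin m) (Fin m) ℝ) *ᵥ x) ⬝ᵥ
      ((star hA.eigenvectorUnitary : Matrix (Fin m) (Fin m) ℝ) *ᵥ x) = x ⬝ᵥ x := by
  rw [← dot_U_mulVec, Matrix.mulVec_mulVec,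
    (Matrix.mem_unitaryGroup_iff).mp hA.eigenvectorUnitary.2, Matrix.one_mulVec]

lemma tendsto_nhdsGT_zero : Tendsto (fun s : ℝ => s) (𝓝[>] (0:ℝ)) (𝓝 0) :=
  tendsto_id.mono_left nhdsWithin_le_nhds

lemma tendsto_s_log_shift (a : ℝ) (ha : 0 ≤ a) :
    Tendsto (fun s : ℝ => s * Real.log (a + s)) (𝓝[>] (0:ℝ)) (𝓝 0) := by
  rcases eq_or_lt_of_le ha with h | h
  · have h0 := tendsto_log_mul_rpow_nhdsGT_zero (r := 1) one_pos
    have h1 : Tendsto (fun s : ℝ => s * Real.log s) (𝓝[>] (0:ℝ)) (𝓝 0) := by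
      refine h0.congr (fun x => ?_)
      rw [Real.rpow_one, mul_comm]
    exact h1.congr (fun x => by rw [← h, zero_add])
  · have h1 : Tendsto (fun s : ℝ => a + s) (𝓝[>] (0:ℝ)) (𝓝 a) := by
      simpa using (tendsto_const_nhds.add tendsto_nhdsGT_zero)
    have h2 : Tendsto Real.log (𝓝 a) (𝓝 (Real.log a)) := Real.continuousAt_log h.ne'
    simpa using tendsto_nhdsGT_zero.mul (h2.comp h1)

lemma tendsto_s_div_shift (a : ℝ) (ha : 0 ≤ a) :
    Tendsto (fun s : ℝ => s / (a + s)) (𝓝[>] (0:ℝ))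
      (𝓝 (if a = 0 then 1 else 0)) := by
  rcases eq_or_lt_of_le ha with h | h
  · rw [if_pos h.symm]
    have he : (fun _ : ℝ => (1:ℝ)) =ᶠ[𝓝[>] (0:ℝ)] fun s => s / (a + s) := by
      filter_upwards [self_mem_nhdsWithin] with x hx
      rw [← h, zero_add, div_self (ne_of_gt hx)]
    exact Tendsto.congr' he tendsto_const_nhds
  · rw [if_neg h.ne']
    have h3 : Tendsto (fun s : ℝ => s / (a + s)) (𝓝[>] (0:ℝ)) (𝓝 (0 / (a + 0))) := by
      apply Tendsto.div tendsto_nhdsGT_zero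
      · exact tendsto_const_nhds.add tendsto_nhdsGT_zero
      · simpa using h.ne'
    simpa using h3

lemma det_add_smul_pos (B : Matrix (Fin m) (Fin m) ℝ) (hB : B.PosSemidef) {s : ℝ}
    (hs : 0 < s) : 0 < (B + s • (1 : Matrix (Fin m) (Fin m) ℝ)).det := by
  rw [det_add_smul B hB.1]
  exact Finset.prod_pos fun i _ => by have := hB.eigenvalues_nonneg i; linarith

lemma tendsto_s_log_det (B : Matrix (Fin m) (Fin m) ℝ) (hB : B.PosSemidef) :
    Tendsto (fun s : ℝ => s * Real.log ((B + s • (1 : Matrix (Fin m) (Fin m) ℝ)).det))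
      (𝓝[>] (0:ℝ)) (𝓝 0) := by
  have he : (fun s : ℝ => ∑ i, s * Real.log (hB.1.eigenvalues i + s)) =ᶠ[𝓝[>] (0:ℝ)]
      (fun s : ℝ => s * Real.log ((B + s • (1 : Matrix (Fin m) (Fin m) ℝ)).det)) := by
    filter_upwards [self_mem_nhdsWithin] with s hs
    rw [det_add_smul B hB.1, Real.log_prod (fun i _ => by
      have := hB.eigenvalues_nonneg i
      have : (0:ℝ) < hB.1.eigenvalues i + s := by
        have := hB.eigenvalues_nonneg i; linarith [Set.mem_Ioi.mp hs]
      exact this.ne'), Finset.mul_sum]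
  have ht : Tendsto (fun s : ℝ => ∑ i, s * Real.log (hB.1.eigenvalues i + s))
      (𝓝[>] (0:ℝ)) (𝓝 (∑ _i : Fin m, (0:ℝ))) :=
    tendsto_finset_sum _ fun i _ => tendsto_s_log_shift _ (hB.eigenvalues_nonneg i)
  simpa using Tendsto.congr' he (by simpa using ht)
/-- Theorem 3, exponential-decay case: let `C = Φ(Σ1+Σ2)Φᵀ` and
`w = Φ(μ1-μ2)`. If `w` is not in the column space of `C`, and `v` is the
orthogonal projection of `w` onto `ker C` (characterized by `C v = 0` and
`w - v ∈ im C`, since `(ker C)ᗮ = im C` for symmetric `C`), then `v ≠ 0` and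
`lim_{σ²→0⁺} σ² log P̄_err(σ²) = -‖v‖²/4 < 0`; in particular the bound decays
exponentially in `1/σ²`. -/
theorem theorem3_exponential_decay (M N : ℕ) (hM : 0 < M) (hN : 0 < N)
    (Φ : Matrix (Fin M) (Fin N) ℝ) (S1 S2 : Matrix (Fin N) (Fin N) ℝ)
    (hS1 : S1.PosSemidef) (hS2 : S2.PosSemidef) (μ1 μ2 : Fin N → ℝ)
    (P1 P2 : ℝ) (hP1 : 0 < P1) (hP2 : 0 < P2) (hP : P1 + P2 = 1)
    (hw : Φ *ᵥ (μ1 - μ2) ∉ LinearMap.range (Φ * (S1 + S2) * Φᵀ).mulVecLin)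
    (v : Fin M → ℝ)
    (hv1 : (Φ * (S1 + S2) * Φᵀ) *ᵥ v = 0)
    (hv2 : Φ *ᵥ (μ1 - μ2) - v ∈ LinearMap.range (Φ * (S1 + S2) * Φᵀ).mulVecLin) :
    v ≠ 0 ∧ -(v ⬝ᵥ v) / 4 < 0 ∧
    Filter.Tendsto (fun s : ℝ => s * Real.log (Perr Φ S1 S2 μ1 μ2 P1 P2 s)) (𝓝[>] 0)
      (𝓝 (-(v ⬝ᵥ v) / 4)) := by
  classical
  set A : Matrix (Fin M) (Fin M) ℝ := Φ * (S1 + S2) * Φᵀ with hAdef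
  set A1 : Matrix (Fin M) (Fin M) ℝ := Φ * S1 * Φᵀ with hA1def
  set A2 : Matrix (Fin M) (Fin M) ℝ := Φ * S2 * Φᵀ with hA2def
  set w : Fin M → ℝ := Φ *ᵥ (μ1 - μ2) with hwdef
  have hApsd : A.PosSemidef := by
    have h12 : (S1 + S2).PosSemidef := hS1.add hS2
    have h := h12.mul_mul_conjTranspose_same Φ
    rwa [conjTranspose_eq_transpose_of_trivial] at h
  have hA1psd : A1.PosSemidef := by
    have h := hS1.mul_mul_conjTranspose_same Φ
    rwa [conjTranspose_eq_transpose_of_trivial] at h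
  have hA2psd : A2.PosSemidef := by
    have h := hS2.mul_mul_conjTranspose_same Φ
    rwa [conjTranspose_eq_transpose_of_trivial] at h
  have hA : A.IsHermitian := hApsd.1
  set lam : Fin M → ℝ := hA.eigenvalues with hlamdef
  have hlam : ∀ i, 0 ≤ lam i := fun i => hApsd.eigenvalues_nonneg i
  set c : Fin M → ℝ := (star hA.eigenvectorUnitary : Matrix (Fin M) (Fin M) ℝ) *ᵥ w with hcdef
  set cv : Fin M → ℝ := (star hA.eigenvectorUnitary : Matrix (Fin M) (Fin M) ℝ) *ᵥ v with hcvdef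
  -- cv vanishes on nonzero eigenvalues
  have hcv : ∀ i, lam i ≠ 0 → cv i = 0 := by
    intro i hi
    have h := coord_mulVec A hA v
    rw [hv1, Matrix.mulVec_zero] at h
    have := congr_fun h.symm i
    rcases mul_eq_zero.mp this with h' | h'
    · exact absurd h' hi
    · exact h'
  -- c agrees with cv on zero eigenvalues
  have hc0 : ∀ i, lam i = 0 → c i = cv i := by
    intro i hi
    obtain ⟨z, hz⟩ := hv2
    have hz' : A *ᵥ z = w - v := hz
    have h := coord_mulVec A hA z
    rw [hz', Matrix.mulVec_sub] at h
    have h2 := congr_fun h i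
    rw [hlamdef] at hi
    simp only [Pi.sub_apply, hi, zero_mul] at h2
    have h3 : c i - cv i = 0 := h2
    linarith
  have hv0 : v ≠ 0 := by
    intro h
    apply hw
    rw [h, sub_zero] at hv2
    exact hv2
  have hvv : v ⬝ᵥ v = ∑ i, (if lam i = 0 then (c i)^2 else 0) := by
    rw [← parseval A hA v]
    rw [dotProduct]
    refine Finset.sum_congr rfl fun i _ => ?_
    have hre : (star (hA.eigenvectorUnitary : Matrix (Fin M) (Fin M) ℝ) *ᵥ v) i = cv i := rfl
    rw [hre]
    by_cases hi : lam i = 0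
    · rw [if_pos hi, ← hc0 i hi]; ring
    · rw [if_neg hi, hcv i hi, mul_zero]
  have hvvpos : 0 < v ⬝ᵥ v := by
    have hnn : 0 ≤ v ⬝ᵥ v := Finset.sum_nonneg fun i _ => mul_self_nonneg (v i)
    rcases lt_or_eq_of_le hnn with h | h
    · exact h
    · exact absurd (dotProduct_self_eq_zero.mp h.symm) hv0
  refine ⟨hv0, by linarith, ?_⟩
  -- the limit
  have hsq : (0:ℝ) < Real.sqrt (P1 * P2) := Real.sqrt_pos.mpr (mul_pos hP1 hP2)
  -- limit of the model function g
  have h1 : Tendsto (fun s : ℝ => s * Real.log (Real.sqrt (P1 * P2))) (𝓝[>] (0:ℝ)) (𝓝 0) := by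
    simpa using tendsto_nhdsGT_zero.mul_const (Real.log (Real.sqrt (P1 * P2)))
  have h2 : Tendsto (fun s : ℝ => ∑ i, 2 * (s / (lam i + s)) * (c i)^2) (𝓝[>] (0:ℝ))
      (𝓝 (∑ i, 2 * (if lam i = 0 then (1:ℝ) else 0) * (c i)^2)) :=
    tendsto_finset_sum _ fun i _ =>
      (((tendsto_s_div_shift (lam i) (hlam i)).const_mul 2).mul_const ((c i)^2))
  have h3 := tendsto_s_log_det A hApsd
  have h4 := tendsto_s_log_det A1 hA1psd
  have h5 := tendsto_s_log_det A2 hA2psd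
  have hM0 : Tendsto (fun s : ℝ => s * ((M:ℝ) * Real.log (1/2))) (𝓝[>] (0:ℝ)) (𝓝 0) := by
    simpa using tendsto_nhdsGT_zero.mul_const ((M:ℝ) * Real.log (1/2))
  have hg : Tendsto (fun s : ℝ =>
      s * Real.log (Real.sqrt (P1 * P2))
      - 1/8 * ∑ i, 2 * (s / (lam i + s)) * (c i)^2
      - 1/2 * ((s * ((M:ℝ) * Real.log (1/2))
          + s * Real.log ((A + s • (1 : Matrix (Fin M) (Fin M) ℝ)).det))
        - (s * Real.log ((A1 + s • (1 : Matrix (Fin M) (Fin M) ℝ)).det)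
          + s * Real.log ((A2 + s • (1 : Matrix (Fin M) (Fin M) ℝ)).det)) / 2))
      (𝓝[>] (0:ℝ))
      (𝓝 (0 - 1/8 * (∑ i, 2 * (if lam i = 0 then (1:ℝ) else 0) * (c i)^2)
        - 1/2 * ((0 + 0) - (0 + 0) / 2))) :=
    (h1.sub (h2.const_mul (1/8))).sub
      (((hM0.add h3).sub ((h4.add h5).div_const 2)).const_mul (1/2))
  have hval : (0 - 1/8 * (∑ i, 2 * (if lam i = 0 then (1:ℝ) else 0) * (c i)^2)
      - 1/2 * ((0 + 0) - (0 + 0) / 2)) = -(v ⬝ᵥ v) / 4 := by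
    rw [hvv]
    have hterm : ∀ i : Fin M, (2 * if lam i = 0 then (1:ℝ) else 0) * c i ^ 2
        = 2 * (if lam i = 0 then c i ^ 2 else 0) := by
      intro i; by_cases hi : lam i = 0 <;> simp [hi]
    simp only [hterm]
    rw [← Finset.mul_sum]
    ring
  rw [hval] at hg
  refine hg.congr' ?_
  filter_upwards [self_mem_nhdsWithin] with s hs
  have hs' : (0:ℝ) < s := hs
  have hlams : ∀ i, (0:ℝ) < lam i + s := fun i => by have := hlam i; linarith
  have hinv := inv_half A hA s (fun i => (hlams i).ne')
  have hquad : w ⬝ᵥ (((1/2 : ℝ) • (A + s • (1 : Matrix (Fin M) (Fin M) ℝ)))⁻¹ *ᵥ w)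
      = ∑ i, ((lam i + s)/2)⁻¹ * (c i)^2 := by
    rw [hinv, quad_UDU]
  have hdA : 0 < (A + s • (1 : Matrix (Fin M) (Fin M) ℝ)).det := det_add_smul_pos A hApsd hs'
  have hd1 : 0 < (A1 + s • (1 : Matrix (Fin M) (Fin M) ℝ)).det := det_add_smul_pos A1 hA1psd hs'
  have hd2 : 0 < (A2 + s • (1 : Matrix (Fin M) (Fin M) ℝ)).det := det_add_smul_pos A2 hA2psd hs'
  have hdetH : ((1/2 : ℝ) • (A + s • (1 : Matrix (Fin M) (Fin M) ℝ))).det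
      = (1/2:ℝ)^M * (A + s • (1 : Matrix (Fin M) (Fin M) ℝ)).det := by
    rw [Matrix.det_smul]; simp
  have hdetHpos : 0 < ((1/2 : ℝ) • (A + s • (1 : Matrix (Fin M) (Fin M) ℝ))).det := by
    rw [hdetH]; positivity
  have hlog : Real.log (((1/2 : ℝ) • (A + s • (1 : Matrix (Fin M) (Fin M) ℝ))).det /
        Real.sqrt ((A1 + s • (1 : Matrix (Fin M) (Fin M) ℝ)).det *
          (A2 + s • (1 : Matrix (Fin M) (Fin M) ℝ)).det))
      = ((M:ℝ) * Real.log (1/2) + Real.log ((A + s • (1 : Matrix (Fin M) (Fin M) ℝ)).det))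
        - (Real.log ((A1 + s • (1 : Matrix (Fin M) (Fin M) ℝ)).det)
          + Real.log ((A2 + s • (1 : Matrix (Fin M) (Fin M) ℝ)).det)) / 2 := by
    rw [Real.log_div hdetHpos.ne' (Real.sqrt_pos.mpr (mul_pos hd1 hd2)).ne',
      Real.log_sqrt (mul_pos hd1 hd2).le, Real.log_mul hd1.ne' hd2.ne',
      hdetH, Real.log_mul (by positivity) hdA.ne', Real.log_pow]
  have hKb : Kb Φ S1 S2 μ1 μ2 s
      = 1/8 * ∑ i, ((lam i + s)/2)⁻¹ * (c i)^2
      + 1/2 * (((M:ℝ) * Real.log (1/2) + Real.log ((A + s • (1 : Matrix (Fin M) (Fin M) ℝ)).det))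
        - (Real.log ((A1 + s • (1 : Matrix (Fin M) (Fin M) ℝ)).det)
          + Real.log ((A2 + s • (1 : Matrix (Fin M) (Fin M) ℝ)).det)) / 2) := by
    unfold Kb
    rw [← hAdef, ← hA1def, ← hA2def, ← hwdef, hquad, hlog]
  have hPerr : Real.log (Perr Φ S1 S2 μ1 μ2 P1 P2 s)
      = Real.log (Real.sqrt (P1 * P2)) - Kb Φ S1 S2 μ1 μ2 s := by
    unfold Perr
    rw [Real.log_mul hsq.ne' (Real.exp_ne_zero _), Real.log_exp]
    ring
  rw [hPerr, hKb, mul_sub]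
  have hsum : s * (1/8 * ∑ i, ((lam i + s)/2)⁻¹ * (c i)^2)
      = 1/8 * ∑ i, 2 * (s / (lam i + s)) * (c i)^2 := by
    rw [Finset.mul_sum, Finset.mul_sum, Finset.mul_sum]
    rw [← Finset.sum_congr rfl (fun i (_ : i ∈ Finset.univ) => by
      have hi := (hlams i).ne'
      field_simp
      : ∀ i ∈ Finset.univ, s * (1/8 * (((lam i + s)/2)⁻¹ * (c i)^2))
        = 1/8 * (2 * (s / (lam i + s)) * (c i)^2))]
  linear_combination hsum
end

section
/- (Theorem 3, in-image case.) Let C = Φ(Σ1+Σ2)Φᵀ and suppose Φ(μ1−μ2) = C z for some z ∈ ℝ^M (i.e., Φ(μ1−μ2) lies in the column space of C), and that (r1 + r2)/2 < r12. Set d = (2·r12 − r1 − r2)/4. Then lim_{σ² → 0+} P̄_err(σ²) / (σ²)^d = exp(−(1/4)·zᵀ C z) · sqrt(P1·P2)·( 2^{−M}·v12 / sqrt(v1·v2) )^{−1/2}; in particular the diversity order is the same as in the zero-mean case and the nonzero means only multiply the low-noise constant by the factor exp(−(1/4)·zᵀ C z) ≤ 1 (the quantity zᵀ C z does not depend on the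 choice of z with C z = Φ(μ1−μ2)). -/
open Matrix MeasureTheory Filter Real Topology

namespace Thm3Aux

variable {n : ℕ} {A : Matrix (Fin n) (Fin n) ℝ}

lemma spectral_real (hA : A.IsHermitian) :
    A = (hA.eigenvectorUnitary : Matrix (Fin n) (Fin n) ℝ) *
        Matrix.diagonal hA.eigenvalues *
        (star hA.eigenvectorUnitary : Matrix (Fin n) (Fin n) ℝ) := by
  have := hA.spectral_theorem
  simpa [RCLike.ofReal_real_eq_id] using this

lemma add_smul_eq (hA : A.IsHermitian) (s : ℝ) :
    A + s • (1 : Matrix (Fin n) (Fin n) ℝ) =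
      (hA.eigenvectorUnitary : Matrix (Fin n) (Fin n) ℝ) *
        Matrix.diagonal (fun i => hA.eigenvalues i + s) *
        (star hA.eigenvectorUnitary : Matrix (Fin n) (Fin n) ℝ) := by
  have hU : (hA.eigenvectorUnitary : Matrix (Fin n) (Fin n) ℝ) *
      (star hA.eigenvectorUnitary : Matrix (Fin n) (Fin n) ℝ) = 1 :=
    (Matrix.mem_unitaryGroup_iff).mp hA.eigenvectorUnitary.2
  have hdiag : Matrix.diagonal (fun i => hA.eigenvalues i + s) =
      Matrix.diagonal hA.eigenvalues + s • (1 : Matrix (Fin n) (Fin n) ℝ) := by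
    ext i j
    by_cases h : i = j <;>
      simp [Matrix.diagonal_apply, Matrix.one_apply, h]
  rw [hdiag, Matrix.mul_add, Matrix.add_mul]
  congr 1
  · exact (spectral_real hA)
  · rw [Matrix.mul_smul, Matrix.smul_mul]
    simp [hU]

lemma det_add_smul (hA : A.IsHermitian) (s : ℝ) :
    (A + s • (1 : Matrix (Fin n) (Fin n) ℝ)).det = ∏ i, (hA.eigenvalues i + s) := by
  have hU : (hA.eigenvectorUnitary : Matrix (Fin n) (Fin n) ℝ) *
      (star hA.eigenvectorUnitary : Matrix (Fin n) (Fin n) ℝ) = 1 :=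
    (Matrix.mem_unitaryGroup_iff).mp hA.eigenvectorUnitary.2
  rw [add_smul_eq hA s, Matrix.det_mul_right_comm, hU]
  simp

lemma inv_add_smul (hA : A.IsHermitian) {s : ℝ}
    (hs : ∀ i, hA.eigenvalues i + s ≠ 0) :
    (A + s • (1 : Matrix (Fin n) (Fin n) ℝ))⁻¹ =
      (hA.eigenvectorUnitary : Matrix (Fin n) (Fin n) ℝ) *
        Matrix.diagonal (fun i => (hA.eigenvalues i + s)⁻¹) *
        (star hA.eigenvectorUnitary : Matrix (Fin n) (Fin n) ℝ) := by
  have hU' : (star hA.eigenvectorUnitary : Matrix (Fin n) (Fin n) ℝ) *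
      (hA.eigenvectorUnitary : Matrix (Fin n) (Fin n) ℝ) = 1 :=
    (Matrix.mem_unitaryGroup_iff').mp hA.eigenvectorUnitary.2
  have hU : (hA.eigenvectorUnitary : Matrix (Fin n) (Fin n) ℝ) *
      (star hA.eigenvectorUnitary : Matrix (Fin n) (Fin n) ℝ) = 1 :=
    (Matrix.mem_unitaryGroup_iff).mp hA.eigenvectorUnitary.2
  apply Matrix.inv_eq_right_inv
  rw [add_smul_eq hA s]
  calc (hA.eigenvectorUnitary : Matrix (Fin n) (Fin n) ℝ) *
        Matrix.diagonal (fun i => hA.eigenvalues i + s) *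
        (star hA.eigenvectorUnitary : Matrix (Fin n) (Fin n) ℝ) *
        ((hA.eigenvectorUnitary : Matrix (Fin n) (Fin n) ℝ) *
          Matrix.diagonal (fun i => (hA.eigenvalues i + s)⁻¹) *
          (star hA.eigenvectorUnitary : Matrix (Fin n) (Fin n) ℝ))
      = (hA.eigenvectorUnitary : Matrix (Fin n) (Fin n) ℝ) *
          (Matrix.diagonal (fun i => hA.eigenvalues i + s) *
            Matrix.diagonal (fun i => (hA.eigenvalues i + s)⁻¹)) *
          (star hA.eigenvectorUnitary : Matrix (Fin n) (Fin n) ℝ) := by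
        rw [Matrix.mul_assoc, Matrix.mul_assoc, Matrix.mul_assoc, Matrix.mul_assoc]
        rw [← Matrix.mul_assoc (star hA.eigenvectorUnitary : Matrix (Fin n) (Fin n) ℝ), hU']
        rw [Matrix.one_mul, ← Matrix.mul_assoc, ← Matrix.mul_assoc]
        rw [Matrix.mul_assoc, Matrix.mul_assoc, Matrix.mul_assoc]
    _ = 1 := by
        rw [Matrix.diagonal_mul_diagonal]
        have : (fun i => (hA.eigenvalues i + s) * (hA.eigenvalues i + s)⁻¹)
            = fun _ => (1:ℝ) := by
          funext i; exact mul_inv_cancel₀ (hs i)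
        rw [this, Matrix.diagonal_one, Matrix.mul_one, hU]

lemma dot_U (hA : A.IsHermitian) (a b : Fin n → ℝ) :
    ((hA.eigenvectorUnitary : Matrix (Fin n) (Fin n) ℝ) *ᵥ a) ⬝ᵥ
      ((hA.eigenvectorUnitary : Matrix (Fin n) (Fin n) ℝ) *ᵥ b) = a ⬝ᵥ b := by
  have hU' : (star hA.eigenvectorUnitary : Matrix (Fin n) (Fin n) ℝ) *
      (hA.eigenvectorUnitary : Matrix (Fin n) (Fin n) ℝ) = 1 :=
    (Matrix.mem_unitaryGroup_iff').mp hA.eigenvectorUnitary.2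
  rw [dotProduct_comm, Matrix.dotProduct_mulVec, ← Matrix.mulVec_transpose,
    ← Matrix.conjTranspose_eq_transpose_of_trivial, ← Matrix.star_eq_conjTranspose,
    Matrix.mulVec_mulVec, hU', Matrix.one_mulVec, dotProduct_comm]

lemma sandwich_mulVec {U B : Matrix (Fin n) (Fin n) ℝ}
    (hU' : star U * U = 1) (v : Fin n → ℝ) :
    (U * B * star U) *ᵥ (U *ᵥ v) = U *ᵥ (B *ᵥ v) := by
  rw [Matrix.mulVec_mulVec, Matrix.mulVec_mulVec, Matrix.mul_assoc (U * B) (star U) U,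
    hU', Matrix.mul_one]

lemma quad_eq (hA : A.IsHermitian) {s : ℝ}
    (hs : ∀ i, hA.eigenvalues i + s ≠ 0) (z : Fin n → ℝ) :
    (A *ᵥ z) ⬝ᵥ ((A + s • (1 : Matrix (Fin n) (Fin n) ℝ))⁻¹ *ᵥ (A *ᵥ z)) =
      ∑ i, (hA.eigenvalues i)^2 / (hA.eigenvalues i + s) *
        (((star hA.eigenvectorUnitary : Matrix (Fin n) (Fin n) ℝ) *ᵥ z) i)^2 := by
  have hU' : (star hA.eigenvectorUnitary : Matrix (Fin n) (Fin n) ℝ) *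
      (hA.eigenvectorUnitary : Matrix (Fin n) (Fin n) ℝ) = 1 :=
    (Matrix.mem_unitaryGroup_iff').mp hA.eigenvectorUnitary.2
  have hAz : A *ᵥ z = (hA.eigenvectorUnitary : Matrix (Fin n) (Fin n) ℝ) *ᵥ
      (Matrix.diagonal hA.eigenvalues *ᵥ
        ((star hA.eigenvectorUnitary : Matrix (Fin n) (Fin n) ℝ) *ᵥ z)) := by
    conv_lhs => rw [spectral_real hA]
    rw [Matrix.mulVec_mulVec, Matrix.mulVec_mulVec]
  have hinvz : (A + s • (1 : Matrix (Fin n) (Fin n) ℝ))⁻¹ *ᵥ (A *ᵥ z) =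
      (hA.eigenvectorUnitary : Matrix (Fin n) (Fin n) ℝ) *ᵥ
        ((Matrix.diagonal fun i => (hA.eigenvalues i + s)⁻¹) *ᵥ
          (Matrix.diagonal hA.eigenvalues *ᵥ
            ((star hA.eigenvectorUnitary : Matrix (Fin n) (Fin n) ℝ) *ᵥ z))) := by
    rw [hAz, inv_add_smul hA hs, sandwich_mulVec hU']
  rw [hinvz, hAz, dot_U hA]
  simp only [dotProduct, Matrix.mulVec_diagonal]
  refine Finset.sum_congr rfl fun i _ => ?_
  field_simp

lemma quad_base (hA : A.IsHermitian) (z : Fin n → ℝ) :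
    z ⬝ᵥ (A *ᵥ z) =
      ∑ i, hA.eigenvalues i *
        (((star hA.eigenvectorUnitary : Matrix (Fin n) (Fin n) ℝ) *ᵥ z) i)^2 := by
  have hAz : A *ᵥ z = (hA.eigenvectorUnitary : Matrix (Fin n) (Fin n) ℝ) *ᵥ
      (Matrix.diagonal hA.eigenvalues *ᵥ
        ((star hA.eigenvectorUnitary : Matrix (Fin n) (Fin n) ℝ) *ᵥ z)) := by
    conv_lhs => rw [spectral_real hA]
    rw [Matrix.mulVec_mulVec, Matrix.mulVec_mulVec]
  have hzU : z ᵥ* (hA.eigenvectorUnitary : Matrix (Fin n) (Fin n) ℝ) =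
      (star hA.eigenvectorUnitary : Matrix (Fin n) (Fin n) ℝ) *ᵥ z := by
    rw [← Matrix.mulVec_transpose, ← Matrix.conjTranspose_eq_transpose_of_trivial,
      ← Matrix.star_eq_conjTranspose]
  rw [hAz, Matrix.dotProduct_mulVec, hzU]
  simp only [dotProduct, Matrix.mulVec_diagonal]
  refine Finset.sum_congr rfl fun i _ => ?_
  ring

lemma card_ne_eq_rank (hA : A.IsHermitian) :
    (Finset.univ.filter fun i => hA.eigenvalues i ≠ 0).card = A.rank := by
  rw [hA.rank_eq_card_non_zero_eigs, Fintype.card_subtype]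

lemma prod_split (hA : A.PosSemidef) (s : ℝ) :
    ∏ i, (hA.1.eigenvalues i + s) =
      (∏ i ∈ Finset.univ.filter (fun i => hA.1.eigenvalues i ≠ 0),
        (hA.1.eigenvalues i + s)) *
      s ^ ((Finset.univ.filter fun i => ¬ hA.1.eigenvalues i ≠ 0).card) := by
  rw [← Finset.prod_filter_mul_prod_filter_not Finset.univ
    (fun i => hA.1.eigenvalues i ≠ 0) (fun i => hA.1.eigenvalues i + s)]
  congr 1
  rw [← Finset.prod_const]
  refine Finset.prod_congr rfl fun i hi => ?_
  have : hA.1.eigenvalues i = 0 := not_not.mp (Finset.mem_filter.mp hi).2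
  rw [this, zero_add]

lemma pp_pos (hA : A.PosSemidef) {s : ℝ} (hs : 0 ≤ s) :
    0 < ∏ i ∈ Finset.univ.filter (fun i => hA.1.eigenvalues i ≠ 0),
      (hA.1.eigenvalues i + s) := by
  refine Finset.prod_pos fun i hi => ?_
  have h1 : hA.1.eigenvalues i ≠ 0 := (Finset.mem_filter.mp hi).2
  have h2 : 0 ≤ hA.1.eigenvalues i := hA.eigenvalues_nonneg i
  have : 0 < hA.1.eigenvalues i := lt_of_le_of_ne h2 (Ne.symm h1)
  linarith

lemma pp_tendsto (hA : A.PosSemidef) :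
    Filter.Tendsto (fun s : ℝ =>
      ∏ i ∈ Finset.univ.filter (fun i => hA.1.eigenvalues i ≠ 0),
        (hA.1.eigenvalues i + s)) (𝓝[>] 0)
      (𝓝 (∏ i ∈ Finset.univ.filter (fun i => hA.1.eigenvalues i ≠ 0),
        hA.1.eigenvalues i)) := by
  have hc : Continuous (fun s : ℝ =>
      ∏ i ∈ Finset.univ.filter (fun i => hA.1.eigenvalues i ≠ 0),
        (hA.1.eigenvalues i + s)) :=
    continuous_finset_prod _ fun i _ => continuous_const.add continuous_id
  have := (hc.tendsto 0).mono_left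
    (nhdsWithin_le_nhds : 𝓝[>] (0:ℝ) ≤ 𝓝 0)
  simpa using this

lemma qsum_tendsto (hA : A.PosSemidef) (u : Fin n → ℝ) :
    Filter.Tendsto (fun s : ℝ =>
      ∑ i, (hA.1.eigenvalues i)^2 / (hA.1.eigenvalues i + s) * (u i)^2) (𝓝[>] 0)
      (𝓝 (∑ i, hA.1.eigenvalues i * (u i)^2)) := by
  refine tendsto_finset_sum _ fun i _ => ?_
  by_cases h : hA.1.eigenvalues i = 0
  · simp only [h, zero_add, ne_eq, zero_pow, zero_div, zero_mul]
    simpa [h] using tendsto_const_nhds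
      (α := ℝ) (f := 𝓝[>] (0:ℝ)) (a := (0:ℝ))
  · have hca : ContinuousAt (fun s : ℝ =>
        (hA.1.eigenvalues i)^2 / (hA.1.eigenvalues i + s) * (u i)^2) 0 := by
      refine ContinuousAt.mul ?_ continuousAt_const
      refine ContinuousAt.div continuousAt_const
        (continuousAt_const.add continuousAt_id) (by simpa using h)
    have := hca.tendsto.mono_left (nhdsWithin_le_nhds : 𝓝[>] (0:ℝ) ≤ 𝓝 0)
    have hval : (hA.1.eigenvalues i)^2 / (hA.1.eigenvalues i + 0) * (u i)^2 =
        hA.1.eigenvalues i * (u i)^2 := by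
      field_simp
      rw [add_zero, mul_div_assoc, mul_div_cancel₀ _ h]
    rwa [hval] at this

lemma pdet_eq (hA : A.IsHermitian) :
    pdet A = ∏ i ∈ Finset.univ.filter (fun i => hA.eigenvalues i ≠ 0),
      hA.eigenvalues i := by
  rw [pdet, dif_pos hA]

lemma main_limit {M : ℕ} (C A1 A2 : Matrix (Fin M) (Fin M) ℝ)
    (hC : C.PosSemidef) (hA1 : A1.PosSemidef) (hA2 : A2.PosSemidef)
    (z : Fin M → ℝ) (P1 P2 : ℝ) (d : ℝ)
    (hd : d = (2 * (C.rank : ℝ) - (A1.rank : ℝ) - (A2.rank : ℝ)) / 4) :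
    Filter.Tendsto (fun s : ℝ =>
      Real.sqrt (P1 * P2) * Real.exp (-(
        1/8 * ((C *ᵥ z) ⬝ᵥ
          (((1/2 : ℝ) • (C + s • (1 : Matrix (Fin M) (Fin M) ℝ)))⁻¹ *ᵥ (C *ᵥ z)))
        + 1/2 * Real.log
          (((1/2 : ℝ) • (C + s • (1 : Matrix (Fin M) (Fin M) ℝ))).det /
            Real.sqrt ((A1 + s • (1 : Matrix (Fin M) (Fin M) ℝ)).det *
              (A2 + s • (1 : Matrix (Fin M) (Fin M) ℝ)).det)))) / s ^ d)
      (𝓝[>] 0)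
      (𝓝 (Real.exp (-(1/4) * (z ⬝ᵥ (C *ᵥ z))) *
        (Real.sqrt (P1 * P2) *
          ((2:ℝ) ^ (-(M:ℝ)) * pdet C /
            Real.sqrt (pdet A1 * pdet A2)) ^ (-(1:ℝ)/2)))) := by
  have hZ : z ⬝ᵥ (C *ᵥ z) =
      ∑ i, hC.1.eigenvalues i *
        (((star hC.1.eigenvectorUnitary : Matrix (Fin M) (Fin M) ℝ) *ᵥ z) i)^2 :=
    quad_base hC.1 z
  -- positivity of limiting quantities
  have hv12 : 0 < ∏ i ∈ Finset.univ.filter (fun i => hC.1.eigenvalues i ≠ 0),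
      hC.1.eigenvalues i := by simpa using pp_pos hC (le_refl 0)
  have hv1 : 0 < ∏ i ∈ Finset.univ.filter (fun i => hA1.1.eigenvalues i ≠ 0),
      hA1.1.eigenvalues i := by simpa using pp_pos hA1 (le_refl 0)
  have hv2 : 0 < ∏ i ∈ Finset.univ.filter (fun i => hA2.1.eigenvalues i ≠ 0),
      hA2.1.eigenvalues i := by simpa using pp_pos hA2 (le_refl 0)
  have hcpos : 0 < (2:ℝ) ^ (-(M:ℝ)) * pdet C / Real.sqrt (pdet A1 * pdet A2) := by
    rw [pdet_eq hC.1, pdet_eq hA1.1, pdet_eq hA2.1]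
    exact div_pos (mul_pos (Real.rpow_pos_of_pos two_pos _) hv12)
      (Real.sqrt_pos.mpr (mul_pos hv1 hv2))
  -- cardinality bookkeeping
  have hcardgen : ∀ (B : Matrix (Fin M) (Fin M) ℝ) (hB : B.IsHermitian),
      ((Finset.univ.filter fun i => ¬ hB.eigenvalues i ≠ 0).card : ℝ) =
        (M:ℝ) - (B.rank : ℝ) := by
    intro B hB
    have h := Finset.card_filter_add_card_filter_not
      (s := (Finset.univ : Finset (Fin M))) (p := fun i => hB.eigenvalues i ≠ 0)
    rw [card_ne_eq_rank hB] at h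
    have hcard : (Finset.univ : Finset (Fin M)).card = M := by simp
    rw [hcard] at h
    have := congrArg (Nat.cast : ℕ → ℝ) h
    push_cast at this
    linarith
  have hk12 := hcardgen C hC.1
  have hk1 := hcardgen A1 hA1.1
  have hk2 := hcardgen A2 hA2.1
  -- the exponent
  set e : ℝ := ((Finset.univ.filter fun i => ¬ hC.1.eigenvalues i ≠ 0).card : ℝ)
      - (((Finset.univ.filter fun i => ¬ hA1.1.eigenvalues i ≠ 0).card : ℝ)
        + ((Finset.univ.filter fun i => ¬ hA2.1.eigenvalues i ≠ 0).card : ℝ))/2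
      with he
  have hed : e * (-(1:ℝ)/2) = d := by
    rw [he, hk12, hk1, hk2, hd]; ring
  -- pointwise identity on Ioi 0
  have key : ∀ s ∈ Set.Ioi (0:ℝ),
      Real.sqrt (P1 * P2) * Real.exp (-(
        1/8 * ((C *ᵥ z) ⬝ᵥ
          (((1/2 : ℝ) • (C + s • (1 : Matrix (Fin M) (Fin M) ℝ)))⁻¹ *ᵥ (C *ᵥ z)))
        + 1/2 * Real.log
          (((1/2 : ℝ) • (C + s • (1 : Matrix (Fin M) (Fin M) ℝ))).det /
            Real.sqrt ((A1 + s • (1 : Matrix (Fin M) (Fin M) ℝ)).det *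
              (A2 + s • (1 : Matrix (Fin M) (Fin M) ℝ)).det)))) / s ^ d
      = Real.sqrt (P1 * P2) *
        (Real.exp (-(1/4 * (∑ i, (hC.1.eigenvalues i)^2 / (hC.1.eigenvalues i + s) *
            (((star hC.1.eigenvectorUnitary : Matrix (Fin M) (Fin M) ℝ) *ᵥ z) i)^2))) *
          ((2:ℝ) ^ (-(M:ℝ)) *
            (∏ i ∈ Finset.univ.filter (fun i => hC.1.eigenvalues i ≠ 0),
              (hC.1.eigenvalues i + s)) /
            Real.sqrt ((∏ i ∈ Finset.univ.filter (fun i => hA1.1.eigenvalues i ≠ 0),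
                (hA1.1.eigenvalues i + s)) *
              (∏ i ∈ Finset.univ.filter (fun i => hA2.1.eigenvalues i ≠ 0),
                (hA2.1.eigenvalues i + s)))) ^ (-(1:ℝ)/2)) := by
    intro s hs
    rw [Set.mem_Ioi] at hs
    have hposC : ∀ i, 0 < hC.1.eigenvalues i + s := fun i => by
      have := hC.eigenvalues_nonneg i; linarith
    have hposA1 : ∀ i, 0 < hA1.1.eigenvalues i + s := fun i => by
      have := hA1.eigenvalues_nonneg i; linarith
    have hposA2 : ∀ i, 0 < hA2.1.eigenvalues i + s := fun i => by
      have := hA2.eigenvalues_nonneg i; linarith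
    have hppC := pp_pos hC hs.le
    have hppA1 := pp_pos hA1 hs.le
    have hppA2 := pp_pos hA2 hs.le
    -- determinant of C + s I is a unit
    have hdetCpos : 0 < (C + s • (1 : Matrix (Fin M) (Fin M) ℝ)).det := by
      rw [det_add_smul hC.1]
      exact Finset.prod_pos fun i _ => hposC i
    have hunit : IsUnit (C + s • (1 : Matrix (Fin M) (Fin M) ℝ)).det :=
      isUnit_iff_ne_zero.mpr (ne_of_gt hdetCpos)
    -- inverse of the halved matrix
    have hhalfinv : ((1/2 : ℝ) • (C + s • (1 : Matrix (Fin M) (Fin M) ℝ)))⁻¹ =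
        (2:ℝ) • (C + s • (1 : Matrix (Fin M) (Fin M) ℝ))⁻¹ := by
      apply Matrix.inv_eq_left_inv
      rw [Matrix.smul_mul, Matrix.mul_smul, smul_smul]
      norm_num
      exact Matrix.nonsing_inv_mul _ hunit
    -- quadratic form
    have hquad : (C *ᵥ z) ⬝ᵥ
        (((1/2 : ℝ) • (C + s • (1 : Matrix (Fin M) (Fin M) ℝ)))⁻¹ *ᵥ (C *ᵥ z)) =
        2 * (∑ i, (hC.1.eigenvalues i)^2 / (hC.1.eigenvalues i + s) *
            (((star hC.1.eigenvectorUnitary : Matrix (Fin M) (Fin M) ℝ) *ᵥ z) i)^2) := by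
      rw [hhalfinv, Matrix.smul_mulVec, dotProduct_smul, smul_eq_mul,
        quad_eq hC.1 (fun i => (hposC i).ne') z]
    -- determinant ratio
    have h2M : ((1/2:ℝ)) ^ (Fintype.card (Fin M)) = (2:ℝ)^(-(M:ℝ)) := by
      rw [Fintype.card_fin, one_div, inv_pow, ← Real.rpow_natCast 2 M,
        ← Real.rpow_neg (by norm_num : (0:ℝ) ≤ 2)]
    have hratio : ((1/2 : ℝ) • (C + s • (1 : Matrix (Fin M) (Fin M) ℝ))).det /
        Real.sqrt ((A1 + s • (1 : Matrix (Fin M) (Fin M) ℝ)).det *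
          (A2 + s • (1 : Matrix (Fin M) (Fin M) ℝ)).det)
        = ((2:ℝ) ^ (-(M:ℝ)) *
            (∏ i ∈ Finset.univ.filter (fun i => hC.1.eigenvalues i ≠ 0),
              (hC.1.eigenvalues i + s)) /
            Real.sqrt ((∏ i ∈ Finset.univ.filter (fun i => hA1.1.eigenvalues i ≠ 0),
                (hA1.1.eigenvalues i + s)) *
              (∏ i ∈ Finset.univ.filter (fun i => hA2.1.eigenvalues i ≠ 0),
                (hA2.1.eigenvalues i + s)))) * s ^ e := by
      rw [Matrix.det_smul, det_add_smul hC.1, prod_split hC, det_add_smul hA1.1,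
        prod_split hA1, det_add_smul hA2.1, prod_split hA2, h2M]
      have hsqrtsplit : Real.sqrt
          (((∏ i ∈ Finset.univ.filter (fun i => hA1.1.eigenvalues i ≠ 0),
              (hA1.1.eigenvalues i + s)) *
            s ^ ((Finset.univ.filter fun i => ¬ hA1.1.eigenvalues i ≠ 0).card)) *
          ((∏ i ∈ Finset.univ.filter (fun i => hA2.1.eigenvalues i ≠ 0),
              (hA2.1.eigenvalues i + s)) *
            s ^ ((Finset.univ.filter fun i => ¬ hA2.1.eigenvalues i ≠ 0).card)))
          = Real.sqrt ((∏ i ∈ Finset.univ.filter (fun i => hA1.1.eigenvalues i ≠ 0),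
              (hA1.1.eigenvalues i + s)) *
            (∏ i ∈ Finset.univ.filter (fun i => hA2.1.eigenvalues i ≠ 0),
              (hA2.1.eigenvalues i + s))) *
            s ^ ((((Finset.univ.filter fun i => ¬ hA1.1.eigenvalues i ≠ 0).card : ℝ)
              + ((Finset.univ.filter fun i => ¬ hA2.1.eigenvalues i ≠ 0).card : ℝ))/2) := by
        rw [show ((∏ i ∈ Finset.univ.filter (fun i => hA1.1.eigenvalues i ≠ 0),
              (hA1.1.eigenvalues i + s)) *
            s ^ ((Finset.univ.filter fun i => ¬ hA1.1.eigenvalues i ≠ 0).card)) *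
          ((∏ i ∈ Finset.univ.filter (fun i => hA2.1.eigenvalues i ≠ 0),
              (hA2.1.eigenvalues i + s)) *
            s ^ ((Finset.univ.filter fun i => ¬ hA2.1.eigenvalues i ≠ 0).card))
          = ((∏ i ∈ Finset.univ.filter (fun i => hA1.1.eigenvalues i ≠ 0),
              (hA1.1.eigenvalues i + s)) *
            (∏ i ∈ Finset.univ.filter (fun i => hA2.1.eigenvalues i ≠ 0),
              (hA2.1.eigenvalues i + s))) *
            s ^ ((Finset.univ.filter fun i => ¬ hA1.1.eigenvalues i ≠ 0).card
              + (Finset.univ.filter fun i => ¬ hA2.1.eigenvalues i ≠ 0).card)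
          from by rw [pow_add]; ring]
        rw [Real.sqrt_mul (le_of_lt (mul_pos hppA1 hppA2))]
        congr 1
        rw [← Real.rpow_natCast s
          ((Finset.univ.filter fun i => ¬ hA1.1.eigenvalues i ≠ 0).card
            + (Finset.univ.filter fun i => ¬ hA2.1.eigenvalues i ≠ 0).card),
          Real.sqrt_eq_rpow, ← Real.rpow_mul hs.le]
        congr 1
        push_cast
        ring
      rw [hsqrtsplit, ← Real.rpow_natCast s
        ((Finset.univ.filter fun i => ¬ hC.1.eigenvalues i ≠ 0).card)]
      rw [show (2:ℝ)^(-(M:ℝ)) *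
          ((∏ i ∈ Finset.univ.filter (fun i => hC.1.eigenvalues i ≠ 0),
            (hC.1.eigenvalues i + s)) *
          s ^ (((Finset.univ.filter fun i => ¬ hC.1.eigenvalues i ≠ 0).card : ℝ)))
          = ((2:ℝ)^(-(M:ℝ)) *
            (∏ i ∈ Finset.univ.filter (fun i => hC.1.eigenvalues i ≠ 0),
              (hC.1.eigenvalues i + s))) *
          s ^ (((Finset.univ.filter fun i => ¬ hC.1.eigenvalues i ≠ 0).card : ℝ))
          from by ring]
      rw [mul_div_mul_comm, ← Real.rpow_sub hs, he]
    -- positivity of H s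
    have hHpos : 0 < (2:ℝ) ^ (-(M:ℝ)) *
        (∏ i ∈ Finset.univ.filter (fun i => hC.1.eigenvalues i ≠ 0),
          (hC.1.eigenvalues i + s)) /
        Real.sqrt ((∏ i ∈ Finset.univ.filter (fun i => hA1.1.eigenvalues i ≠ 0),
            (hA1.1.eigenvalues i + s)) *
          (∏ i ∈ Finset.univ.filter (fun i => hA2.1.eigenvalues i ≠ 0),
            (hA2.1.eigenvalues i + s))) :=
      div_pos (mul_pos (Real.rpow_pos_of_pos two_pos _) hppC)
        (Real.sqrt_pos.mpr (mul_pos hppA1 hppA2))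
    have hRpos : 0 < ((2:ℝ) ^ (-(M:ℝ)) *
        (∏ i ∈ Finset.univ.filter (fun i => hC.1.eigenvalues i ≠ 0),
          (hC.1.eigenvalues i + s)) /
        Real.sqrt ((∏ i ∈ Finset.univ.filter (fun i => hA1.1.eigenvalues i ≠ 0),
            (hA1.1.eigenvalues i + s)) *
          (∏ i ∈ Finset.univ.filter (fun i => hA2.1.eigenvalues i ≠ 0),
            (hA2.1.eigenvalues i + s)))) * s ^ e :=
      mul_pos hHpos (Real.rpow_pos_of_pos hs _)
    rw [hquad, hratio]
    rw [show -(1/8 * (2 * (∑ i, (hC.1.eigenvalues i)^2 / (hC.1.eigenvalues i + s) *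
            (((star hC.1.eigenvectorUnitary : Matrix (Fin M) (Fin M) ℝ) *ᵥ z) i)^2))
        + 1/2 * Real.log (((2:ℝ) ^ (-(M:ℝ)) *
            (∏ i ∈ Finset.univ.filter (fun i => hC.1.eigenvalues i ≠ 0),
              (hC.1.eigenvalues i + s)) /
            Real.sqrt ((∏ i ∈ Finset.univ.filter (fun i => hA1.1.eigenvalues i ≠ 0),
                (hA1.1.eigenvalues i + s)) *
              (∏ i ∈ Finset.univ.filter (fun i => hA2.1.eigenvalues i ≠ 0),
                (hA2.1.eigenvalues i + s)))) * s ^ e))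
        = -(1/4 * (∑ i, (hC.1.eigenvalues i)^2 / (hC.1.eigenvalues i + s) *
            (((star hC.1.eigenvectorUnitary : Matrix (Fin M) (Fin M) ℝ) *ᵥ z) i)^2))
          + Real.log (((2:ℝ) ^ (-(M:ℝ)) *
            (∏ i ∈ Finset.univ.filter (fun i => hC.1.eigenvalues i ≠ 0),
              (hC.1.eigenvalues i + s)) /
            Real.sqrt ((∏ i ∈ Finset.univ.filter (fun i => hA1.1.eigenvalues i ≠ 0),
                (hA1.1.eigenvalues i + s)) *
              (∏ i ∈ Finset.univ.filter (fun i => hA2.1.eigenvalues i ≠ 0),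
                (hA2.1.eigenvalues i + s)))) * s ^ e) * (-(1:ℝ)/2)
        from by ring]
    rw [Real.exp_add, ← Real.rpow_def_of_pos hRpos]
    rw [Real.mul_rpow hHpos.le (Real.rpow_pos_of_pos hs e).le, ← Real.rpow_mul hs.le,
      hed]
    have hsd : s ^ d ≠ 0 := ne_of_gt (Real.rpow_pos_of_pos hs d)
    field_simp
  -- limit of the model function
  have hQten : Filter.Tendsto (fun s : ℝ =>
      ∑ i, (hC.1.eigenvalues i)^2 / (hC.1.eigenvalues i + s) *
        (((star hC.1.eigenvectorUnitary : Matrix (Fin M) (Fin M) ℝ) *ᵥ z) i)^2)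
      (𝓝[>] 0) (𝓝 (z ⬝ᵥ (C *ᵥ z))) := by
    rw [hZ]
    exact qsum_tendsto hC _
  have hexp : Filter.Tendsto (fun s : ℝ =>
      Real.exp (-(1/4 * (∑ i, (hC.1.eigenvalues i)^2 / (hC.1.eigenvalues i + s) *
        (((star hC.1.eigenvectorUnitary : Matrix (Fin M) (Fin M) ℝ) *ᵥ z) i)^2))))
      (𝓝[>] 0) (𝓝 (Real.exp (-(1/4 * (z ⬝ᵥ (C *ᵥ z)))))) :=
    (Real.continuous_exp.tendsto _).comp ((hQten.const_mul (1/4:ℝ)).neg)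
  have hHten : Filter.Tendsto (fun s : ℝ =>
      (2:ℝ) ^ (-(M:ℝ)) *
        (∏ i ∈ Finset.univ.filter (fun i => hC.1.eigenvalues i ≠ 0),
          (hC.1.eigenvalues i + s)) /
        Real.sqrt ((∏ i ∈ Finset.univ.filter (fun i => hA1.1.eigenvalues i ≠ 0),
            (hA1.1.eigenvalues i + s)) *
          (∏ i ∈ Finset.univ.filter (fun i => hA2.1.eigenvalues i ≠ 0),
            (hA2.1.eigenvalues i + s))))
      (𝓝[>] 0) (𝓝 ((2:ℝ) ^ (-(M:ℝ)) * pdet C / Real.sqrt (pdet A1 * pdet A2))) := by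
    rw [pdet_eq hC.1, pdet_eq hA1.1, pdet_eq hA2.1]
    exact (tendsto_const_nhds.mul (pp_tendsto hC)).div
      (((pp_tendsto hA1).mul (pp_tendsto hA2)).sqrt)
      (ne_of_gt (Real.sqrt_pos.mpr (mul_pos hv1 hv2)))
  have hHrpow := hHten.rpow_const (p := -(1:ℝ)/2) (Or.inl (ne_of_gt hcpos))
  have hmain := tendsto_const_nhds (α := ℝ) (x := Real.sqrt (P1 * P2))
    (f := 𝓝[>] (0:ℝ)) |>.mul (hexp.mul hHrpow)
  have hconst : Real.sqrt (P1 * P2) *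
      (Real.exp (-(1/4 * (z ⬝ᵥ (C *ᵥ z)))) *
        ((2:ℝ) ^ (-(M:ℝ)) * pdet C / Real.sqrt (pdet A1 * pdet A2)) ^ (-(1:ℝ)/2))
      = Real.exp (-(1/4) * (z ⬝ᵥ (C *ᵥ z))) *
        (Real.sqrt (P1 * P2) *
          ((2:ℝ) ^ (-(M:ℝ)) * pdet C /
            Real.sqrt (pdet A1 * pdet A2)) ^ (-(1:ℝ)/2)) := by
    rw [show -(1/4 * (z ⬝ᵥ (C *ᵥ z))) = -(1/4) * (z ⬝ᵥ (C *ᵥ z)) from by ring]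
    ring
  rw [hconst] at hmain
  refine hmain.congr' ?_
  exact eventually_mem_nhdsWithin.mono fun s hs => (key s hs).symm


end Thm3Aux

/-- Theorem 3, in-image case: let `C = Φ(Σ1+Σ2)Φᵀ` and suppose
`Φ(μ1-μ2) = C z` lies in the column space of `C`, with `(r1+r2)/2 < r12` and
`d = (2 r12 - r1 - r2)/4`. Then `lim_{σ²→0⁺} P̄_err(σ²)/(σ²)^d =
exp(-(1/4) zᵀ C z) · sqrt(P1 P2) (2^{-M} v12/sqrt(v1 v2))^{-1/2}`; the
diversity order is as in the zero-mean case, the extra factor satisfies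
`exp(-(1/4) zᵀ C z) ≤ 1`, and `zᵀ C z` does not depend on the choice of `z`. -/
theorem theorem3_in_image (M N : ℕ) (hM : 0 < M) (hN : 0 < N)
    (Φ : Matrix (Fin M) (Fin N) ℝ) (S1 S2 : Matrix (Fin N) (Fin N) ℝ)
    (hS1 : S1.PosSemidef) (hS2 : S2.PosSemidef) (μ1 μ2 : Fin N → ℝ)
    (P1 P2 : ℝ) (hP1 : 0 < P1) (hP2 : 0 < P2) (hP : P1 + P2 = 1)
    (z : Fin M → ℝ) (hz : Φ *ᵥ (μ1 - μ2) = (Φ * (S1 + S2) * Φᵀ) *ᵥ z)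
    (hrank : (Φ * S1 * Φᵀ).rank + (Φ * S2 * Φᵀ).rank < 2 * (Φ * (S1 + S2) * Φᵀ).rank)
    (d : ℝ)
    (hd : d = (2 * ((Φ * (S1 + S2) * Φᵀ).rank : ℝ) - ((Φ * S1 * Φᵀ).rank : ℝ)
      - ((Φ * S2 * Φᵀ).rank : ℝ)) / 4) :
    Filter.Tendsto (fun s : ℝ => Perr Φ S1 S2 μ1 μ2 P1 P2 s / s ^ d) (𝓝[>] 0)
      (𝓝 (Real.exp (-(1/4) * (z ⬝ᵥ ((Φ * (S1 + S2) * Φᵀ) *ᵥ z))) *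
        (Real.sqrt (P1 * P2) *
          ((2:ℝ) ^ (-(M:ℝ)) * pdet (Φ * (S1 + S2) * Φᵀ) /
            Real.sqrt (pdet (Φ * S1 * Φᵀ) * pdet (Φ * S2 * Φᵀ))) ^ (-(1:ℝ)/2)))) ∧
    Real.exp (-(1/4) * (z ⬝ᵥ ((Φ * (S1 + S2) * Φᵀ) *ᵥ z))) ≤ 1 ∧
    (∀ z' : Fin M → ℝ, (Φ * (S1 + S2) * Φᵀ) *ᵥ z' = Φ *ᵥ (μ1 - μ2) →
      z' ⬝ᵥ ((Φ * (S1 + S2) * Φᵀ) *ᵥ z') = z ⬝ᵥ ((Φ * (S1 + S2) * Φᵀ) *ᵥ z)) := by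
  have hC : (Φ * (S1 + S2) * Φᵀ).PosSemidef := by
    have := (hS1.add hS2).mul_mul_conjTranspose_same Φ
    rwa [Matrix.conjTranspose_eq_transpose_of_trivial] at this
  have hA1 : (Φ * S1 * Φᵀ).PosSemidef := by
    have := hS1.mul_mul_conjTranspose_same Φ
    rwa [Matrix.conjTranspose_eq_transpose_of_trivial] at this
  have hA2 : (Φ * S2 * Φᵀ).PosSemidef := by
    have := hS2.mul_mul_conjTranspose_same Φ
    rwa [Matrix.conjTranspose_eq_transpose_of_trivial] at this
  refine ⟨?_, ?_, ?_⟩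
  · have hlim := Thm3Aux.main_limit (Φ * (S1 + S2) * Φᵀ) (Φ * S1 * Φᵀ)
      (Φ * S2 * Φᵀ) hC hA1 hA2 z P1 P2 d hd
    refine Filter.Tendsto.congr (fun s => ?_) hlim
    simp only [Perr, Kb, hz]
  · rw [Real.exp_le_one_iff]
    have h0 : 0 ≤ z ⬝ᵥ ((Φ * (S1 + S2) * Φᵀ) *ᵥ z) := by simpa using hC.dotProduct_mulVec_nonneg z
    nlinarith
  · intro z' hz'
    have hsym : (Φ * (S1 + S2) * Φᵀ)ᵀ = Φ * (S1 + S2) * Φᵀ := by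
      have := hC.1
      rwa [Matrix.IsHermitian, Matrix.conjTranspose_eq_transpose_of_trivial] at this
    have hCzz : (Φ * (S1 + S2) * Φᵀ) *ᵥ z' = (Φ * (S1 + S2) * Φᵀ) *ᵥ z := by
      rw [hz', hz]
    calc z' ⬝ᵥ ((Φ * (S1 + S2) * Φᵀ) *ᵥ z')
        = z' ⬝ᵥ ((Φ * (S1 + S2) * Φᵀ) *ᵥ z) := by rw [hCzz]
      _ = ((Φ * (S1 + S2) * Φᵀ) *ᵥ z) ⬝ᵥ z := by
          rw [Matrix.dotProduct_mulVec, ← Matrix.mulVec_transpose, hsym, hCzz]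
      _ = z ⬝ᵥ ((Φ * (S1 + S2) * Φᵀ) *ᵥ z) := dotProduct_comm _ _
end

section
/- (Limit of the quadratic form for vectors in the image.) Let C be a real symmetric positive semidefinite M×M matrix, let z ∈ ℝ^M, and set w = C z. Then for every ε > 0 the matrix C + ε·I is positive definite, and lim_{ε → 0+} wᵀ (C + ε·I)^{−1} w = zᵀ C z. Moreover, the value zᵀ C z depends only on w: if C z = C z′ = w then zᵀ C z = z′ᵀ C z′. -/
open Matrix Filter Topology

/-- Limit of the quadratic form for vectors in the image: for a real symmetric
positive semidefinite `M × M` matrix `C` and `w = C z`, the matrix `C + ε I`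
is positive definite for every `ε > 0`, and
`lim_{ε→0⁺} wᵀ (C + ε I)⁻¹ w = zᵀ C z`; moreover `zᵀ C z` depends only on `w`. -/
theorem quadratic_form_limit_in_image (M : ℕ) (hM : 0 < M)
    (C : Matrix (Fin M) (Fin M) ℝ) (hC : C.PosSemidef) (z : Fin M → ℝ) :
    (∀ ε : ℝ, 0 < ε → (C + ε • (1 : Matrix (Fin M) (Fin M) ℝ)).PosDef) ∧
    Tendsto
      (fun ε : ℝ => (C *ᵥ z) ⬝ᵥ ((C + ε • (1 : Matrix (Fin M) (Fin M) ℝ))⁻¹ *ᵥ (C *ᵥ z)))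
      (𝓝[>] 0) (𝓝 (z ⬝ᵥ (C *ᵥ z))) ∧
    (∀ z' : Fin M → ℝ, C *ᵥ z' = C *ᵥ z → z' ⬝ᵥ (C *ᵥ z') = z ⬝ᵥ (C *ᵥ z)) := by
  have hCt : Cᵀ = C := (by simpa using hC.1 : C.IsSymm).eq
  -- symmetry of the bilinear form
  have hsym : ∀ a b : Fin M → ℝ, (C *ᵥ a) ⬝ᵥ b = a ⬝ᵥ (C *ᵥ b) := by
    intro a b
    rw [dotProduct_mulVec, ← mulVec_transpose, hCt]
  have hCnn : ∀ x : Fin M → ℝ, 0 ≤ x ⬝ᵥ (C *ᵥ x) := by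
    intro x; simpa using hC.dotProduct_mulVec_nonneg x
  have hself : ∀ x : Fin M → ℝ, 0 ≤ x ⬝ᵥ x := by
    intro x
    exact Finset.sum_nonneg fun i _ => mul_self_nonneg _
  -- Part 1
  have hPD : ∀ ε : ℝ, 0 < ε → (C + ε • (1 : Matrix (Fin M) (Fin M) ℝ)).PosDef := by
    intro ε hε
    refine Matrix.PosDef.posSemidef_add hC (Matrix.PosDef.of_dotProduct_mulVec_pos (by simp [Matrix.IsHermitian, conjTranspose_smul]) ?_)
    intro x hx
    have hxx : 0 < x ⬝ᵥ x := by
      simpa using dotProduct_star_self_pos_iff.mpr hx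
    have : (ε • (1 : Matrix (Fin M) (Fin M) ℝ)) *ᵥ x = ε • x := by
      rw [smul_mulVec, one_mulVec]
    rw [show star x = x from star_trivial x, this, dotProduct_smul]
    exact mul_pos hε hxx
  refine ⟨hPD, ?_, ?_⟩
  · -- Part 2 : the limit
    set T : ℝ := z ⬝ᵥ (C *ᵥ z) with hT
    have key : ∀ ε : ℝ, 0 < ε →
        T - ε * (z ⬝ᵥ z) ≤
          (C *ᵥ z) ⬝ᵥ ((C + ε • (1 : Matrix (Fin M) (Fin M) ℝ))⁻¹ *ᵥ (C *ᵥ z)) ∧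
        (C *ᵥ z) ⬝ᵥ ((C + ε • (1 : Matrix (Fin M) (Fin M) ℝ))⁻¹ *ᵥ (C *ᵥ z)) ≤ T := by
      intro ε hε
      set A : Matrix (Fin M) (Fin M) ℝ := C + ε • (1 : Matrix (Fin M) (Fin M) ℝ) with hA
      have hPDε := hPD ε hε
      have hdet : IsUnit A.det := isUnit_iff_ne_zero.mpr hPDε.det_pos.ne'
      set u : Fin M → ℝ := A⁻¹ *ᵥ z with hu
      have hAu : A *ᵥ u = z := by
        rw [hu, mulVec_mulVec, mul_nonsing_inv _ hdet, one_mulVec]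
      have hAv : ∀ v : Fin M → ℝ, A *ᵥ v = C *ᵥ v + ε • v := by
        intro v
        rw [hA, add_mulVec, smul_mulVec, one_mulVec]
      have hCu : C *ᵥ u = z - ε • u := by
        have := hAv u
        rw [hAu] at this
        rw [eq_sub_iff_add_eq, ← this]
      -- A⁻¹ *ᵥ (C *ᵥ z) = z - ε • u
      have hinvCz : A⁻¹ *ᵥ (C *ᵥ z) = z - ε • u := by
        have hCz : C *ᵥ z = A *ᵥ z - ε • z := by
          rw [hAv z]; abel
        rw [hCz, mulVec_sub, mulVec_smul, mulVec_mulVec, nonsing_inv_mul _ hdet, one_mulVec, ← hu]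
      set s : ℝ := z ⬝ᵥ u with hs
      have hexpr : (C *ᵥ z) ⬝ᵥ (A⁻¹ *ᵥ (C *ᵥ z)) = T - ε * (z ⬝ᵥ z) + ε ^ 2 * s := by
        rw [hinvCz]
        have h1 : (C *ᵥ z) ⬝ᵥ (z - ε • u) = (C *ᵥ z) ⬝ᵥ z - ε * ((C *ᵥ z) ⬝ᵥ u) := by
          rw [dotProduct_sub, dotProduct_smul, smul_eq_mul]
        have h2 : (C *ᵥ z) ⬝ᵥ u = z ⬝ᵥ z - ε * s := by
          rw [hsym z u, hCu, dotProduct_sub, dotProduct_smul, smul_eq_mul, hs]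
        have h3 : (C *ᵥ z) ⬝ᵥ z = T := by rw [hsym z z, hT]
        rw [h1, h2, h3]; ring
      -- bounds on s
      have hs0 : 0 ≤ s := by
        have : s = u ⬝ᵥ (C *ᵥ u) + ε * (u ⬝ᵥ u) := by
          rw [hs, ← hAu, hAv u, dotProduct_comm, dotProduct_add, dotProduct_smul, smul_eq_mul]
        rw [this]
        exact add_nonneg (hCnn u) (mul_nonneg hε.le (hself u))
      have huu : ε * (u ⬝ᵥ u) ≤ s := by
        have : s = u ⬝ᵥ (C *ᵥ u) + ε * (u ⬝ᵥ u) := by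
          rw [hs, ← hAu, hAv u, dotProduct_comm, dotProduct_add, dotProduct_smul, smul_eq_mul]
        rw [this]
        have := hCnn u
        linarith
      have hcs : s ^ 2 ≤ (z ⬝ᵥ z) * (u ⬝ᵥ u) := by
        have h := Finset.sum_mul_sq_le_sq_mul_sq Finset.univ z u
        have e1 : (∑ i, z i * u i) = s := rfl
        have e2 : (∑ i, z i ^ 2) = z ⬝ᵥ z := by
          simp [dotProduct, sq]
        have e3 : (∑ i, u i ^ 2) = u ⬝ᵥ u := by
          simp [dotProduct, sq]
        rw [e1, e2, e3] at h
        exact h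
      have hεs : ε * s ≤ z ⬝ᵥ z := by
        have hzz := hself z
        have huu' := hself u
        nlinarith [mul_le_mul_of_nonneg_left huu hzz, hs0]
      constructor
      · rw [hexpr]
        nlinarith [mul_nonneg (sq_nonneg ε) hs0]
      · rw [hexpr]
        nlinarith
    have hlow : Tendsto (fun ε : ℝ => T - ε * (z ⬝ᵥ z)) (𝓝[>] (0:ℝ)) (𝓝 T) := by
      have : Tendsto (fun ε : ℝ => T - ε * (z ⬝ᵥ z)) (𝓝 (0:ℝ)) (𝓝 (T - 0 * (z ⬝ᵥ z))) := by
        exact (continuous_const.sub (continuous_id.mul continuous_const)).tendsto 0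
      simpa using this.mono_left nhdsWithin_le_nhds
    refine tendsto_of_tendsto_of_tendsto_of_le_of_le' hlow tendsto_const_nhds ?_ ?_
    · filter_upwards [self_mem_nhdsWithin] with ε hε
      exact (key ε hε).1
    · filter_upwards [self_mem_nhdsWithin] with ε hε
      exact (key ε hε).2
  · -- Part 3
    intro z' hz'
    have h1 : z' ⬝ᵥ (C *ᵥ z') = z' ⬝ᵥ (C *ᵥ z) := by rw [hz']
    have h2 : z' ⬝ᵥ (C *ᵥ z) = z ⬝ᵥ (C *ᵥ z) := by
      rw [← hsym z' z, hz', hsym z z]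
    rw [h1, h2]
end

section
/- (Blow-up of the quadratic form for vectors outside the image.) Let C be a real symmetric positive semidefinite M×M matrix and let w ∈ ℝ^M be a vector not in the column space of C. Let v be the orthogonal projection of w onto ker C (which equals the orthogonal complement of the column space of C since C is symmetric). Then v ≠ 0 and lim_{ε → 0+} ε · wᵀ (C + ε·I)^{−1} w = ‖v‖² > 0; in particular wᵀ (C + ε·I)^{−1} w → ∞ as ε → 0+. -/
open Matrix Filter Topology

/-- Blow-up of the quadratic form for vectors outside the image: for a real
symmetric positive semidefinite `M × M` matrix `C` and a vector `w` not in the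
column space of `C`, let `v` be the orthogonal projection of `w` onto `ker C`
(characterized by `C v = 0` and `w - v ∈ im C`, since `(ker C)ᗮ = im C` for
symmetric `C`). Then `v ≠ 0`, `lim_{ε→0⁺} ε · wᵀ (C + ε I)⁻¹ w = ‖v‖² > 0`,
and in particular `wᵀ (C + ε I)⁻¹ w → ∞` as `ε → 0⁺`. -/
theorem quadratic_form_blowup_out_of_image (M : ℕ) (hM : 0 < M)
    (C : Matrix (Fin M) (Fin M) ℝ) (hC : C.PosSemidef) (w : Fin M → ℝ)
    (hw : w ∉ LinearMap.range C.mulVecLin)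
    (v : Fin M → ℝ) (hv1 : C *ᵥ v = 0) (hv2 : w - v ∈ LinearMap.range C.mulVecLin) :
    v ≠ 0 ∧ 0 < v ⬝ᵥ v ∧
    Tendsto
      (fun ε : ℝ => ε * (w ⬝ᵥ ((C + ε • (1 : Matrix (Fin M) (Fin M) ℝ))⁻¹ *ᵥ w)))
      (𝓝[>] 0) (𝓝 (v ⬝ᵥ v)) ∧
    Tendsto (fun ε : ℝ => w ⬝ᵥ ((C + ε • (1 : Matrix (Fin M) (Fin M) ℝ))⁻¹ *ᵥ w))
      (𝓝[>] 0) atTop := by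
  classical
  obtain ⟨x, hx⟩ := hv2
  rw [Matrix.mulVecLin_apply] at hx
  set u : Fin M → ℝ := w - v with hu
  have hCsym : Cᵀ = C := by simpa using hC.isHermitian.eq
  have hsymdot : ∀ a b : Fin M → ℝ, a ⬝ᵥ (C *ᵥ b) = b ⬝ᵥ (C *ᵥ a) := fun a b => by
    rw [Matrix.dotProduct_mulVec, ← Matrix.mulVec_transpose, dotProduct_comm, hCsym]
  have hCquad : ∀ a : Fin M → ℝ, 0 ≤ a ⬝ᵥ (C *ᵥ a) := fun a => by
    simpa using hC.dotProduct_mulVec_nonneg a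
  -- v ≠ 0
  have hvne : v ≠ 0 := by
    rintro rfl
    rw [hu, sub_zero] at hx
    exact hw ⟨x, by simpa [Matrix.mulVecLin_apply] using hx⟩
  have hvv : 0 < v ⬝ᵥ v := by
    rcases lt_or_eq_of_le (Finset.sum_nonneg fun i _ => mul_self_nonneg (v i) :
        (0:ℝ) ≤ v ⬝ᵥ v) with h | h
    · exact h
    · exact absurd (dotProduct_self_eq_zero.mp h.symm) hvne
  have huv : u ⬝ᵥ v = 0 := by
    rw [← hx, dotProduct_comm, hsymdot v x, hv1, dotProduct_zero]
  set K : ℝ := x ⬝ᵥ (C *ᵥ x) with hK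
  have hK0 : 0 ≤ K := hCquad x
  -- positive definiteness of C + ε • 1
  have hPD : ∀ ε : ℝ, 0 < ε → (C + ε • (1 : Matrix (Fin M) (Fin M) ℝ)).PosDef := by
    intro ε hε
    refine Matrix.PosDef.posSemidef_add hC (Matrix.PosDef.of_dotProduct_mulVec_pos ?_ fun y hy => ?_)
    · unfold Matrix.IsHermitian; simp
    · simp only [Matrix.smul_mulVec, Matrix.one_mulVec, dotProduct_smul]
      have : (0:ℝ) < star y ⬝ᵥ y := (Matrix.dotProduct_star_self_pos_iff).mpr hy
      positivity
  -- main decomposition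
  have key : ∀ ε : ℝ, 0 < ε →
      w ⬝ᵥ ((C + ε • (1 : Matrix (Fin M) (Fin M) ℝ))⁻¹ *ᵥ w)
        = ε⁻¹ * (v ⬝ᵥ v) + u ⬝ᵥ ((C + ε • (1 : Matrix (Fin M) (Fin M) ℝ))⁻¹ *ᵥ u) ∧
      0 ≤ u ⬝ᵥ ((C + ε • (1 : Matrix (Fin M) (Fin M) ℝ))⁻¹ *ᵥ u) ∧
      u ⬝ᵥ ((C + ε • (1 : Matrix (Fin M) (Fin M) ℝ))⁻¹ *ᵥ u) ≤ K := by
    intro ε hε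
    set A : Matrix (Fin M) (Fin M) ℝ := C + ε • (1 : Matrix (Fin M) (Fin M) ℝ) with hA
    have hApd := hPD ε hε
    have hAunit : IsUnit A.det := hApd.isUnit.map (Matrix.detMonoidHom)
    have hAinvmul : A⁻¹ * A = 1 := Matrix.nonsing_inv_mul A hAunit
    have hAmulinv : A * A⁻¹ = 1 := Matrix.mul_nonsing_inv A hAunit
    have hAcancel : ∀ y : Fin M → ℝ, A⁻¹ *ᵥ (A *ᵥ y) = y := fun y => by
      rw [Matrix.mulVec_mulVec, hAinvmul, Matrix.one_mulVec]
    have hAcancel' : ∀ y : Fin M → ℝ, A *ᵥ (A⁻¹ *ᵥ y) = y := fun y => by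
      rw [Matrix.mulVec_mulVec, hAmulinv, Matrix.one_mulVec]
    have hAv : A *ᵥ v = ε • v := by
      rw [hA, Matrix.add_mulVec, hv1, Matrix.smul_mulVec, Matrix.one_mulVec, zero_add]
    have hAinvv : A⁻¹ *ᵥ v = ε⁻¹ • v := by
      have : A *ᵥ (ε⁻¹ • v) = v := by
        rw [Matrix.mulVec_smul, hAv, smul_smul, inv_mul_cancel₀ hε.ne', one_smul]
      conv_lhs => rw [← this]
      rw [hAcancel]
    have hAinvsym : (A⁻¹)ᵀ = A⁻¹ := by simpa using hApd.inv.isHermitian.eq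
    have hsymdotAinv : ∀ a b : Fin M → ℝ, a ⬝ᵥ (A⁻¹ *ᵥ b) = b ⬝ᵥ (A⁻¹ *ᵥ a) := fun a b => by
      rw [Matrix.dotProduct_mulVec, ← Matrix.mulVec_transpose, dotProduct_comm, hAinvsym]
    -- z and t
    set z : Fin M → ℝ := A⁻¹ *ᵥ u with hz
    set t : ℝ := u ⬝ᵥ z with ht
    have huz : u = A *ᵥ z := (hAcancel' u).symm
    have htexpand : t = z ⬝ᵥ (C *ᵥ z) + ε * (z ⬝ᵥ z) := by
      rw [ht, dotProduct_comm, huz, hA, Matrix.add_mulVec, dotProduct_add,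
        Matrix.smul_mulVec, Matrix.one_mulVec, dotProduct_smul, smul_eq_mul]
    have hzCz : 0 ≤ z ⬝ᵥ (C *ᵥ z) := hCquad z
    have hzz : 0 ≤ z ⬝ᵥ z := Finset.sum_nonneg fun i _ => mul_self_nonneg (z i)
    have ht0 : 0 ≤ t := by
      rw [htexpand]; positivity
    have hzCzt : z ⬝ᵥ (C *ᵥ z) ≤ t := by
      rw [htexpand]; nlinarith
    -- Cauchy-Schwarz via discriminant
    have htxz : t = x ⬝ᵥ (C *ᵥ z) := by
      rw [ht, ← hx, dotProduct_comm, hsymdot]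
    have hCS : t ^ 2 ≤ (z ⬝ᵥ (C *ᵥ z)) * K := by
      have hquad : ∀ r : ℝ, 0 ≤ (z ⬝ᵥ (C *ᵥ z)) * (r * r) + (2 * t) * r + K := by
        intro r
        have h0 := hCquad (x + r • z)
        have hexp : (x + r • z) ⬝ᵥ (C *ᵥ (x + r • z))
            = (z ⬝ᵥ (C *ᵥ z)) * (r * r) + (2 * t) * r + K := by
          rw [Matrix.mulVec_add, Matrix.mulVec_smul, dotProduct_add,
            add_dotProduct, add_dotProduct, dotProduct_smul,
            smul_dotProduct, smul_dotProduct, dotProduct_smul,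
            hsymdot z x, ← htxz]
          simp only [smul_eq_mul, hK]
          ring
        rw [hexp] at h0
        exact h0
      have := discrim_le_zero hquad
      rw [discrim] at this
      nlinarith
    have htK : t ≤ K := by
      have h1 : t * t ≤ t * K := by nlinarith
      rcases eq_or_lt_of_le ht0 with h | h
      · rw [← h]; exact hK0
      · exact le_of_mul_le_mul_left h1 h
    refine ⟨?_, ht0, htK⟩
    -- decomposition of the quadratic form
    have hwvu : w = v + u := by rw [hu]; ring
    have e1 : v ⬝ᵥ (A⁻¹ *ᵥ v) = ε⁻¹ * (v ⬝ᵥ v) := by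
      rw [hAinvv, dotProduct_smul, smul_eq_mul]
    have e2 : u ⬝ᵥ (A⁻¹ *ᵥ v) = 0 := by
      rw [hAinvv, dotProduct_smul, smul_eq_mul, huv, mul_zero]
    have e3 : v ⬝ᵥ (A⁻¹ *ᵥ u) = 0 := by rw [hsymdotAinv]; exact e2
    rw [hwvu, Matrix.mulVec_add, dotProduct_add, add_dotProduct,
      add_dotProduct, e1, e2, e3]
    ring
  -- the limit ε * w ⬝ A⁻¹ w → v⬝v
  have hg : Tendsto (fun ε : ℝ =>
      ε * (u ⬝ᵥ ((C + ε • (1 : Matrix (Fin M) (Fin M) ℝ))⁻¹ *ᵥ u))) (𝓝[>] 0) (𝓝 0) := by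
    have hle1 : ∀ᶠ ε in 𝓝[>] (0:ℝ), (0:ℝ) ≤
        ε * (u ⬝ᵥ ((C + ε • (1 : Matrix (Fin M) (Fin M) ℝ))⁻¹ *ᵥ u)) := by
      filter_upwards [self_mem_nhdsWithin] with ε (hε : 0 < ε)
      exact mul_nonneg hε.le (key ε hε).2.1
    have hle2 : ∀ᶠ ε in 𝓝[>] (0:ℝ),
        ε * (u ⬝ᵥ ((C + ε • (1 : Matrix (Fin M) (Fin M) ℝ))⁻¹ *ᵥ u)) ≤ ε * K := by
      filter_upwards [self_mem_nhdsWithin] with ε (hε : 0 < ε)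
      exact mul_le_mul_of_nonneg_left (key ε hε).2.2 hε.le
    have hup : Tendsto (fun ε : ℝ => ε * K) (𝓝[>] 0) (𝓝 0) := by
      have : Tendsto (fun ε : ℝ => ε * K) (𝓝 0) (𝓝 (0 * K)) :=
        (continuous_id.mul continuous_const).tendsto 0
      rw [zero_mul] at this
      exact this.mono_left nhdsWithin_le_nhds
    exact tendsto_of_tendsto_of_tendsto_of_le_of_le' tendsto_const_nhds hup hle1 hle2
  have hmain : Tendsto
      (fun ε : ℝ => ε * (w ⬝ᵥ ((C + ε • (1 : Matrix (Fin M) (Fin M) ℝ))⁻¹ *ᵥ w)))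
      (𝓝[>] 0) (𝓝 (v ⬝ᵥ v)) := by
    have heq : ∀ᶠ ε in 𝓝[>] (0:ℝ),
        (v ⬝ᵥ v) + ε * (u ⬝ᵥ ((C + ε • (1 : Matrix (Fin M) (Fin M) ℝ))⁻¹ *ᵥ u))
          = ε * (w ⬝ᵥ ((C + ε • (1 : Matrix (Fin M) (Fin M) ℝ))⁻¹ *ᵥ w)) := by
      filter_upwards [self_mem_nhdsWithin] with ε (hε : 0 < ε)
      rw [(key ε hε).1, mul_add, ← mul_assoc, mul_inv_cancel₀ hε.ne', one_mul]
    have : Tendsto (fun ε : ℝ =>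
        (v ⬝ᵥ v) + ε * (u ⬝ᵥ ((C + ε • (1 : Matrix (Fin M) (Fin M) ℝ))⁻¹ *ᵥ u)))
        (𝓝[>] 0) (𝓝 (v ⬝ᵥ v)) := by
      simpa using (tendsto_const_nhds.add hg)
    exact this.congr' heq
  refine ⟨hvne, hvv, hmain, ?_⟩
  -- blow-up
  have hlow : Tendsto (fun ε : ℝ => (v ⬝ᵥ v) * ε⁻¹) (𝓝[>] 0) atTop :=
    (tendsto_inv_nhdsGT_zero).const_mul_atTop hvv
  refine tendsto_atTop_mono' _ ?_ hlow
  filter_upwards [self_mem_nhdsWithin] with ε (hε : 0 < ε)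
  rw [(key ε hε).1]
  have := (key ε hε).2.1
  nlinarith [inv_pos.mpr hε]
end
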